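/- arXiv:1809.08845 — 2 statements merged into one kernel-verified Lean document; each statement's English description precedes it below -/
import Mathlib

section
/- For every vertex μ of Γ, the value semigroup SV_μ is generated, as a submonoid of ℕ, by the Zariski exponents of μ: SV_μ = ⟨V_{μτ} : τ an end of Γ, i.e. v_Γ(τ) ≤ 1⟩. -/
open Matrix BigOperators

open scoped Classical

noncomputable section

/-- Proximity data of a dual graph on vertex set `Fin N`, built from a single
root vertex by a finite sequence of elementary modifications. Vertices are
ordered by creation; each new vertex is proximate to at most two existing
(earlier) vertices, which must be adjacent to each other at that time if
there are two of them. -/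
structure DualGraph where
  N : ℕ
  Npos : 0 < N
  prox : Fin N → Fin N → Prop
  prox_lt : ∀ {μ ν}, prox μ ν → ν < μ
  prox_card : ∀ μ, {ν | prox μ ν}.ncard ≤ 2
  prox_nonempty : ∀ μ : Fin N, 0 < (μ : ℕ) → ∃ ν, prox μ ν
  prox_pair : ∀ {μ a b}, prox μ a → prox μ b → a ≠ b →
      (prox a b ∨ prox b a) ∧ ∀ ρ, ρ < μ → ¬(prox ρ a ∧ prox ρ b)

namespace DualGraph

variable (G : DualGraph)

/-- The proximity matrix `P`. -/
def P : Matrix (Fin G.N) (Fin G.N) ℚ :=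
  fun μ ν => if μ = ν then 1 else if G.prox μ ν then -1 else 0

/-- `Q = P⁻¹`. -/
def Q : Matrix (Fin G.N) (Fin G.N) ℚ := (G.P)⁻¹

/-- The valuation matrix `V = (PᵀP)⁻¹`. -/
def V : Matrix (Fin G.N) (Fin G.N) ℚ := (G.Pᵀ * G.P)⁻¹

/-- Adjacency in the dual graph: `μ ∼ ν` iff `(PᵀP)_{μν} = -1`. -/
def adj (μ ν : Fin G.N) : Prop := μ ≠ ν ∧ (G.Pᵀ * G.P) μ ν = -1

lemma adj_symm {μ ν : Fin G.N} (h : G.adj μ ν) : G.adj ν μ := by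
  obtain ⟨hne, h2⟩ := h
  refine ⟨hne.symm, ?_⟩
  have ht : (G.Pᵀ * G.P)ᵀ = G.Pᵀ * G.P := by
    rw [Matrix.transpose_mul, Matrix.transpose_transpose]
  calc (G.Pᵀ * G.P) ν μ = (G.Pᵀ * G.P)ᵀ μ ν := rfl
    _ = (G.Pᵀ * G.P) μ ν := by rw [ht]
    _ = -1 := h2

/-- The dual graph as a simple graph. -/
def graph : SimpleGraph (Fin G.N) where
  Adj := G.adj
  symm := ⟨fun _ _ h => G.adj_symm h⟩
  loopless := ⟨fun μ h => h.1 rfl⟩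

/-- The graph distance `d(μ,ν)`. -/
def dist (μ ν : Fin G.N) : ℕ := G.graph.dist μ ν

/-- The set of vertices on the unique path `[μ,γ]` from `μ` to `γ`. -/
def pathSet (μ γ : Fin G.N) : Finset (Fin G.N) :=
  Finset.univ.filter (fun ν => G.dist μ ν + G.dist ν γ = G.dist μ γ)

/-- The branch `Γ^μ_ν` emanating from `μ` towards `ν`: the maximal connected
subgraph of `Γ` containing `ν` but not `μ` (with `Γ^μ_μ = ∅`). -/
def branch (μ ν : Fin G.N) : Finset (Fin G.N) :=
  Finset.univ.filter (fun η => ν ≠ μ ∧ η ≠ μ ∧ μ ∉ G.pathSet ν η)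

/-- The set of vertices adjacent to `μ`. -/
def nbrs (μ : Fin G.N) : Finset (Fin G.N) := Finset.univ.filter (fun ν => G.adj μ ν)

/-- The valence `v_Γ(μ)`: the number of vertices adjacent to `μ`. -/
def valence (μ : Fin G.N) : ℕ := (G.nbrs μ).card

/-- The weight `w_Γ(μ) = (PᵀP)_{μμ}`. -/
def w (μ : Fin G.N) : ℚ := (G.Pᵀ * G.P) μ μ

/-- The canonical vector `k`, `k_ν = Σ_μ q_{νμ}`. -/
def kvec : Fin G.N → ℚ := fun ν => ∑ μ, G.Q ν μ

/-- A divisor with valuation vector `f` is antinef iff its factorization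
vector `f̂ = f PᵀP` is nonnegative. -/
def Antinef (f : Fin G.N → ℚ) : Prop := ∀ ν, 0 ≤ (f ᵥ* (G.Pᵀ * G.P)) ν

/-- `λ(fE, gE; ν) = (f_ν + k_ν + 1)/g_ν` for divisors with valuation
vectors `f`, `g`. -/
def lamDiv (f g : Fin G.N → ℚ) (ν : Fin G.N) : ℚ := (f ν + G.kvec ν + 1) / g ν

/-- `ρ_{[μ,γ]}(ν) = V_{γν}/V_{μν}`. -/
def rho (μ γ ν : Fin G.N) : ℚ := G.V γ ν / G.V μ ν

/-- `r̂_{[μ,γ]} = 𝟙_γ − ρ_{[μ,γ]}(μ)·𝟙_μ`. -/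
def rhat (μ γ : Fin G.N) : Fin G.N → ℚ :=
  fun j => (if j = γ then 1 else 0) - G.rho μ γ μ * (if j = μ then 1 else 0)

/-- `φ_η^{[μ,γ]}(ν) = (r̂_{[μ,γ]}V)_ν / V_{ην}`. -/
def phi (η μ γ ν : Fin G.N) : ℚ := (G.rhat μ γ ᵥ* G.V) ν / G.V η ν

/-- The transform `f̂_{⟨ĝ⟩[ĥ]}` relative to the vertex `μ`. -/
def transform (μ : Fin G.N) (fh gh hh : Fin G.N → ℚ) : Fin G.N → ℚ :=
  fh - (∑ i ∈ G.nbrs μ, ∑ j ∈ G.branch μ i, gh j • G.rhat i j)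
     + ∑ i ∈ G.nbrs μ, hh i • G.rhat μ i

/-- The transform `f̂^𝒩 = f̂ − Σ_i f̂_i·r̂_{[μ,i]}` relative to the vertex `μ`. -/
def nmap (μ : Fin G.N) (fh : Fin G.N → ℚ) : Fin G.N → ℚ :=
  fh - ∑ i, fh i • G.rhat μ i

/-- A vertex is free if it is proximate to at most one vertex. -/
def Free (μ : Fin G.N) : Prop := {ν | G.prox μ ν}.ncard ≤ 1

/-- `μ` is infinitely near to `ν` (written `ν ⊂ μ`): the reflexive-transitive
closure of proximity. -/
def InfNear (μ ν : Fin G.N) : Prop := Relation.ReflTransGen G.prox μ ν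

/-- The root vertex. -/
def root : Fin G.N := ⟨0, G.Npos⟩

/-- The branch `Γ^μ_ν` is anterior to `μ` if `μ` is infinitely near to some of
its vertices; otherwise it is posterior. -/
def Anterior (μ ν : Fin G.N) : Prop := ∃ η ∈ G.branch μ ν, G.InfNear μ η

/-- The pair `(γ,τ)` associated to `μ`. -/
def PairAssociated (γ τ μ : Fin G.N) : Prop :=
  G.InfNear τ γ ∧ G.InfNear μ τ ∧ G.Free τ ∧
  (∀ ν, G.Free ν → G.InfNear μ ν → G.InfNear τ ν) ∧
  ((¬ G.Free γ ∧ ∀ ν, ¬ G.Free ν → G.InfNear τ ν → G.InfNear γ ν) ∨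
   ((∀ ν, G.InfNear τ ν → G.Free ν) ∧ γ = G.root))

/-- The entries of `V` as natural numbers (they are positive integers). -/
def Vnat (μ ν : Fin G.N) : ℕ := (G.V μ ν).num.toNat

/-- The submonoid `SV^μ_ν` of `ℕ` generated by `{V_{μi} : i ∈ Γ^μ_ν ∪ {μ}}`. -/
def SVb (μ ν : Fin G.N) : AddSubmonoid ℕ :=
  AddSubmonoid.closure ↑((insert μ (G.branch μ ν)).image (G.Vnat μ))

/-- `s^μ_ν = gcd{V_{μi} : i ∈ Γ^μ_ν ∪ {μ}}`. -/
def sgcd (μ ν : Fin G.N) : ℕ := (insert μ (G.branch μ ν)).gcd (G.Vnat μ)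

/-- The submonoid `S^μ` of `ℕ` generated by the `s^μ_ν`, `ν ∈ Γ`. -/
def Ssg (μ : Fin G.N) : AddSubmonoid ℕ :=
  AddSubmonoid.closure (Set.range (fun ν => G.sgcd μ ν))

/-- The valuation vector `d = d̂V` of the ideal with factorization vector `d̂`. -/
def dval (dh : Fin G.N → ℕ) : Fin G.N → ℚ := (fun i => (dh i : ℚ)) ᵥ* G.V

/-- `λ(a,ν) = (a + k_ν + 1)/d_ν`. -/
def lamA (dh : Fin G.N → ℕ) (a : ℚ) (ν : Fin G.N) : ℚ :=
  (a + G.kvec ν + 1) / G.dval dh ν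

/-- The set of jumping numbers of the ideal with factorization vector `d̂`
supported at the vertex `μ`. -/
def Hset (dh : Fin G.N → ℕ) (μ : Fin G.N) : Set ℚ :=
  { ξ | ∃ f : Fin G.N → ℤ, G.Antinef (fun i => (f i : ℚ)) ∧
      (∀ ν, G.lamA dh (f μ : ℚ) μ ≤ G.lamA dh (f ν : ℚ) ν) ∧
      ξ = G.lamA dh (f μ : ℚ) μ }

end DualGraph
end


open Finset Matrix

open scoped Classical

namespace Stmt11

variable (G : DualGraph)

/-- the Finset of vertices `v` is proximate to -/
noncomputable def U (v : Fin G.N) : Finset (Fin G.N) :=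
  Finset.univ.filter (fun j => G.prox v j)

lemma mem_U {G : DualGraph} {v j : Fin G.N} : j ∈ U G v ↔ G.prox v j := by
  simp [U]

lemma U_lt {G : DualGraph} {v j : Fin G.N} (h : j ∈ U G v) : (j : ℕ) < (v : ℕ) :=
  G.prox_lt (mem_U.1 h)

noncomputable def Qf (G : DualGraph) : ℕ → Fin G.N → ℕ
  | v, k =>
    if h : v < G.N then
      (if v = (k : ℕ) then 1 else 0) +
        ∑ j ∈ (U G ⟨v, h⟩).attach, Qf G ((j : Fin G.N) : ℕ) k
    else 0
  termination_by v => v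
  decreasing_by
    exact U_lt j.2

/-- multiplicities: `Qn v k` is the entry `(P⁻¹)_{v k}`. -/
noncomputable def Qn (v k : Fin G.N) : ℕ := Qf G (v : ℕ) k

lemma Qn_eq (v k : Fin G.N) :
    Qn G v k = (if v = k then 1 else 0) + ∑ j ∈ U G v, Qn G j k := by
  rw [Qn, Qf]
  rw [dif_pos v.isLt]
  congr 1
  · simp [Fin.val_eq_val]
  · rw [← Finset.sum_attach (U G v) (fun j => Qn G j k)]
    simp [Qn]

lemma Qn_eq_zero_aux {G : DualGraph} :
    ∀ n, ∀ v k : Fin G.N, (v : ℕ) = n → (v : ℕ) < (k : ℕ) → Qn G v k = 0 := by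
  intro n
  induction n using Nat.strong_induction_on with
  | _ n ih =>
    intro v k hv hvk
    rw [Qn_eq, if_neg (by intro h; subst h; omega)]
    rw [zero_add]
    refine Finset.sum_eq_zero fun j hj => ?_
    have hj' := U_lt hj
    exact ih (j : ℕ) (by omega) j k rfl (by omega)

lemma Qn_eq_zero {G : DualGraph} {v k : Fin G.N} (h : (v : ℕ) < (k : ℕ)) : Qn G v k = 0 :=
  Qn_eq_zero_aux (v : ℕ) v k rfl h

lemma Qn_self (v : Fin G.N) : Qn G v v = 1 := by
  rw [Qn_eq, if_pos rfl]
  rw [Finset.sum_eq_zero fun j hj => Qn_eq_zero (U_lt hj)]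
  rfl

/-- the root vertex -/
noncomputable def rt : Fin G.N := ⟨0, G.Npos⟩

lemma Qn_root_pos_aux {G : DualGraph} :
    ∀ n, ∀ v : Fin G.N, (v : ℕ) = n → 1 ≤ Qn G v (rt G) := by
  intro n
  induction n using Nat.strong_induction_on with
  | _ n ih =>
    intro v hv
    rw [Qn_eq]
    rcases Nat.eq_zero_or_pos (v : ℕ) with h0 | h0
    · have : v = rt G := by
        apply Fin.ext; simpa [rt] using h0
      rw [if_pos this]
      omega
    · obtain ⟨ν, hν⟩ := G.prox_nonempty v h0
      have hmem : ν ∈ U G v := mem_U.2 hν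
      have h1 : 1 ≤ Qn G ν (rt G) := ih (ν : ℕ) (by have := U_lt hmem; omega) ν rfl
      have h2 : Qn G ν (rt G) ≤ ∑ j ∈ U G v, Qn G j (rt G) :=
        Finset.single_le_sum (f := fun j => Qn G j (rt G)) (fun i _ => Nat.zero_le _) hmem
      omega

lemma Qn_root_pos {G : DualGraph} (v : Fin G.N) : 1 ≤ Qn G v (rt G) :=
  Qn_root_pos_aux (v : ℕ) v rfl

/-- `W μ ν` is the (integral, positive) entry `V_{μν}` of the valuation matrix. -/
noncomputable def W (μ ν : Fin G.N) : ℕ := ∑ k, Qn G μ k * Qn G ν k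

lemma W_comm (μ ν : Fin G.N) : W G μ ν = W G ν μ := by
  unfold W; exact Finset.sum_congr rfl fun k _ => mul_comm _ _

lemma W_pos (μ ν : Fin G.N) : 1 ≤ W G μ ν := by
  have h1 : 1 ≤ Qn G μ (rt G) * Qn G ν (rt G) :=
    Nat.one_le_iff_ne_zero.2 (Nat.mul_ne_zero
      (by have := Qn_root_pos μ; omega) (by have := Qn_root_pos ν; omega))
  calc 1 ≤ Qn G μ (rt G) * Qn G ν (rt G) := h1
    _ ≤ W G μ ν := Finset.single_le_sum (f := fun k => Qn G μ k * Qn G ν k)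
        (fun i _ => Nat.zero_le _) (mem_univ (rt G))

lemma W_last {v ν : Fin G.N} (h : (ν : ℕ) < (v : ℕ)) :
    W G v ν = ∑ j ∈ U G v, W G j ν := by
  unfold W
  calc ∑ k, Qn G v k * Qn G ν k
      = ∑ k, ((if v = k then Qn G ν k else 0) + ∑ j ∈ U G v, Qn G j k * Qn G ν k) := by
        refine Finset.sum_congr rfl fun k _ => ?_
        rw [Qn_eq G v k, add_mul, Finset.sum_mul, ite_mul, one_mul, zero_mul]
    _ = (∑ k, if v = k then Qn G ν k else 0) + ∑ k, ∑ j ∈ U G v, Qn G j k * Qn G ν k :=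
        Finset.sum_add_distrib
    _ = Qn G ν v + ∑ j ∈ U G v, ∑ k, Qn G j k * Qn G ν k := by
        rw [Finset.sum_ite_eq, if_pos (mem_univ v), Finset.sum_comm]
    _ = ∑ j ∈ U G v, W G j ν := by
        rw [Qn_eq_zero h, zero_add]; rfl

lemma W_last_self (v : Fin G.N) :
    W G v v = 1 + ∑ j ∈ U G v, ∑ j' ∈ U G v, W G j j' := by
  unfold W
  have hS : ∑ j ∈ U G v, Qn G j v = 0 :=
    Finset.sum_eq_zero fun j hj => Qn_eq_zero (U_lt hj)
  have key : ∀ k : Fin G.N, Qn G v k * Qn G v k =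
      (if v = k then (1:ℕ) else 0) + ((if v = k then (2 * ∑ j ∈ U G v, Qn G j k) else 0)
        + (∑ j ∈ U G v, Qn G j k) * (∑ j' ∈ U G v, Qn G j' k)) := by
    intro k
    rw [Qn_eq G v k]
    rcases eq_or_ne v k with h | h
    · simp only [if_pos h]; ring
    · simp only [if_neg h]; ring
  calc ∑ k, Qn G v k * Qn G v k
      = (∑ k, if v = k then (1:ℕ) else 0) +
        ((∑ k, (if v = k then (2 * ∑ j ∈ U G v, Qn G j k) else 0))
         + ∑ k, (∑ j ∈ U G v, Qn G j k) * (∑ j' ∈ U G v, Qn G j' k)) := by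
        rw [← Finset.sum_add_distrib, ← Finset.sum_add_distrib]
        exact Finset.sum_congr rfl fun k _ => key k
    _ = 1 + ∑ j ∈ U G v, ∑ j' ∈ U G v, W G j j' := by
        rw [Finset.sum_ite_eq, if_pos (mem_univ v)]
        rw [Finset.sum_ite_eq, if_pos (mem_univ v), hS, mul_zero, zero_add]
        congr 1
        calc ∑ k, (∑ j ∈ U G v, Qn G j k) * (∑ j' ∈ U G v, Qn G j' k)
            = ∑ k, ∑ j ∈ U G v, ∑ j' ∈ U G v, Qn G j k * Qn G j' k :=
              Finset.sum_congr rfl fun k _ => by rw [Finset.sum_mul_sum]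
          _ = ∑ j ∈ U G v, ∑ j' ∈ U G v, W G j j' := by
              rw [Finset.sum_comm]
              exact Finset.sum_congr rfl fun j _ => Finset.sum_comm

lemma U_card_le (v : Fin G.N) : (U G v).card ≤ 2 := by
  have h := G.prox_card v
  have : {ν | G.prox v ν} = ((U G v : Finset (Fin G.N)) : Set (Fin G.N)) := by
    ext x; simp [U]
  rwa [this, Set.ncard_coe_finset] at h

lemma U_nonempty {G : DualGraph} {v : Fin G.N} (h : 0 < (v : ℕ)) : (U G v).Nonempty :=
  (G.prox_nonempty v h).imp fun _ hν => mem_U.2 hν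


lemma U_one_or_two {G : DualGraph} {v : Fin G.N} (h : 0 < (v : ℕ)) :
    (∃ τ, U G v = {τ}) ∨ (∃ a b, a ≠ b ∧ U G v = {a, b}) := by
  have h1 : 1 ≤ (U G v).card := Finset.card_pos.2 (U_nonempty h)
  have h2 := U_card_le G v
  interval_cases h3 : (U G v).card
  · exact Or.inl (Finset.card_eq_one.1 h3)
  · obtain ⟨a, b, hab, h⟩ := Finset.card_eq_two.1 h3
    exact Or.inr ⟨a, b, hab, h⟩

/-! ### level adjacency and ends -/

def adjL (n : ℕ) (x y : Fin G.N) : Prop :=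
  x ≠ y ∧ (x : ℕ) < n ∧ (y : ℕ) < n ∧ (G.prox x y ∨ G.prox y x) ∧
    ∀ k : Fin G.N, (k : ℕ) < n → ¬(G.prox k x ∧ G.prox k y)

lemma adjL_symm {G : DualGraph} {n : ℕ} {x y : Fin G.N} (h : adjL G n x y) : adjL G n y x :=
  ⟨h.1.symm, h.2.2.1, h.2.1, h.2.2.2.1.symm, fun k hk hc => h.2.2.2.2 k hk ⟨hc.2, hc.1⟩⟩

noncomputable def nbr (n : ℕ) (σ : Fin G.N) : Finset (Fin G.N) :=
  Finset.univ.filter (fun y => adjL G n σ y)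

lemma mem_nbr {G : DualGraph} {n : ℕ} {σ y : Fin G.N} : y ∈ nbr G n σ ↔ adjL G n σ y := by
  simp [nbr]

def EndL (n : ℕ) (σ : Fin G.N) : Prop := (σ : ℕ) < n ∧ (nbr G n σ).card ≤ 1

section Step
variable {G : DualGraph} {n : ℕ} {v : Fin G.N}

lemma adjL_succ_iff (hv : (v : ℕ) = n) {x y : Fin G.N} (hx : (x : ℕ) < n) (hy : (y : ℕ) < n) :
    adjL G (n+1) x y ↔ adjL G n x y ∧ ¬(G.prox v x ∧ G.prox v y) := by
  constructor
  · rintro ⟨h1, _, _, h4, h5⟩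
    exact ⟨⟨h1, hx, hy, h4, fun k hk => h5 k (by omega)⟩, h5 v (by omega)⟩
  · rintro ⟨⟨h1, _, _, h4, h5⟩, h6⟩
    refine ⟨h1, by omega, by omega, h4, fun k hk => ?_⟩
    rcases Nat.lt_or_ge (k : ℕ) n with h | h
    · exact h5 k h
    · have : k = v := Fin.ext (by omega)
      rw [this]; exact h6

lemma adjL_succ_new (hv : (v : ℕ) = n) {x : Fin G.N} (hx : (x : ℕ) < n) :
    adjL G (n+1) x v ↔ x ∈ U G v := by
  constructor
  · rintro ⟨h1, _, _, h4, -⟩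
    rcases h4 with h | h
    · have := G.prox_lt h; exact absurd this (by rw [not_lt, Fin.le_def]; omega)
    · exact mem_U.2 h
  · intro hx'
    have hp := mem_U.1 hx'
    refine ⟨fun h => by subst h; omega, by omega, by omega, Or.inr hp, fun k hk hc => ?_⟩
    have h2 := G.prox_lt hc.2
    rw [Fin.lt_def] at h2
    omega

lemma adjL_succ_new' (hv : (v : ℕ) = n) {x : Fin G.N} (hx : (x : ℕ) < n) :
    adjL G (n+1) v x ↔ x ∈ U G v :=
  ⟨fun h => (adjL_succ_new hv hx).1 (adjL_symm h),
   fun h => adjL_symm ((adjL_succ_new hv hx).2 h)⟩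

lemma nbr_succ_v (hv : (v : ℕ) = n) : nbr G (n+1) v = U G v := by
  ext y
  rw [mem_nbr]
  constructor
  · intro h
    have hy : (y : ℕ) < n := by
      have hy2 := h.2.2.1
      rcases h.2.2.2.1 with hp | hp
      · have := G.prox_lt hp; rw [Fin.lt_def] at this; omega
      · have := G.prox_lt hp; rw [Fin.lt_def] at this; omega
    exact (adjL_succ_new hv hy).1 (adjL_symm h)
  · intro h
    exact (adjL_succ_new' hv (by have := U_lt h; omega)).2 h

lemma EndL_succ_v (hv : (v : ℕ) = n) : EndL G (n+1) v ↔ (U G v).card ≤ 1 := by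
  unfold EndL
  rw [nbr_succ_v hv]
  simp [hv]

end Step

/-! ### monoids -/

def rowSet (n : ℕ) (μ : Fin G.N) : Set ℕ :=
  {m | ∃ σ, EndL G n σ ∧ σ ≠ μ ∧ W G μ σ = m}

noncomputable def MR (n : ℕ) (μ : Fin G.N) : AddSubmonoid ℕ :=
  AddSubmonoid.closure (rowSet G n μ)

def sbSet (n : ℕ) (x y : Fin G.N) (c d : ℕ) : Set ℕ :=
  {m | ∃ σ, EndL G n σ ∧ c * W G x σ + d * W G y σ = m}

noncomputable def MSB (n : ℕ) (x y : Fin G.N) (c d : ℕ) : AddSubmonoid ℕ :=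
  AddSubmonoid.closure (sbSet G n x y c d)

lemma MSB_comm (n : ℕ) (x y : Fin G.N) (c d : ℕ) : MSB G n x y c d = MSB G n y x d c := by
  unfold MSB
  congr 1
  ext m
  exact ⟨fun ⟨σ, h1, h2⟩ => ⟨σ, h1, by omega⟩, fun ⟨σ, h1, h2⟩ => ⟨σ, h1, by omega⟩⟩

lemma mul_mem_closure_of_forall {A : Set ℕ} {S : AddSubmonoid ℕ} (e : ℕ)
    (h : ∀ a ∈ A, e * a ∈ S) {s : ℕ} (hs : s ∈ AddSubmonoid.closure A) : e * s ∈ S := by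
  induction hs using AddSubmonoid.closure_induction with
  | mem a ha => exact h a ha
  | zero => simpa using S.zero_mem
  | add a b _ _ ha hb => rw [mul_add]; exact S.add_mem ha hb

lemma nsmul_mem' (S : AddSubmonoid ℕ) {g : ℕ} (hg : g ∈ S) (t : ℕ) : t * g ∈ S := by
  have := S.nsmul_mem hg t
  simpa [nsmul_eq_mul] using this

lemma euclid {a b m : ℕ} (ha : 2 ≤ a) (hco : Nat.Coprime b a) (hm : a * b ≤ m + b) :
    ∃ t s : ℕ, t < a ∧ m = t * b + s * a := by
  haveI : NeZero a := ⟨by omega⟩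
  set u := ZMod.unitOfCoprime b hco with hu
  set x : ZMod a := (m : ZMod a) * ((u⁻¹ : (ZMod a)ˣ) : ZMod a) with hx
  set t := x.val with ht
  have htlt : t < a := ZMod.val_lt x
  have hcast : ((t * b : ℕ) : ZMod a) = (m : ZMod a) := by
    push_cast
    rw [ht, ZMod.natCast_val, ZMod.cast_id, hx]
    have hub : ((u : (ZMod a)ˣ) : ZMod a) = (b : ZMod a) := ZMod.coe_unitOfCoprime b hco
    rw [mul_assoc, ← hub, Units.inv_mul, mul_one]
  have htb : t * b ≤ m := by
    have h1 : (t+1) * b ≤ a * b := Nat.mul_le_mul_right b (by omega)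
    have h2 : (t+1) * b = t * b + b := by ring
    omega
  have hdvd : a ∣ m - t * b := (Nat.modEq_iff_dvd' htb).1
    ((ZMod.natCast_eq_natCast_iff _ _ _).1 hcast)
  obtain ⟨s, hs⟩ := hdvd
  refine ⟨t, s, htlt, ?_⟩
  rw [Nat.mul_comm s a]
  omega

lemma euclid_conductor {a b w m : ℕ} (ha : 2 ≤ a) (hw : a * w < b)
    (hco : Nat.Coprime b a) (hm : a * b ≤ m) :
    ∃ t s : ℕ, w ≤ s ∧ m = t * b + a * s := by
  have hmb : a * b ≤ m + b := by omega
  obtain ⟨t, s, ht, hts⟩ := euclid ha hco hmb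
  refine ⟨t, s, ?_, by rw [hts]; ring⟩
  by_contra hcon
  push_neg at hcon
  have h1 : t * b + b ≤ a * b := by
    have h1' : (t+1) * b ≤ a * b := Nat.mul_le_mul_right _ (by omega)
    have h1'' : (t+1) * b = t * b + b := by ring
    omega
  have h2 : s * a + a ≤ w * a := by
    have h2' : (s+1) * a ≤ w * a := Nat.mul_le_mul_right _ (by omega)
    have h2'' : (s+1) * a = s * a + a := by ring
    omega
  have hc : w * a = a * w := Nat.mul_comm _ _
  omega

/-! ### the master statements -/

noncomputable def bigB (x y : Fin G.N) (c d : ℕ) : ℕ :=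
  c * c * W G x x + 2 * (c * d * W G x y) + d * d * W G y y + c * d

structure Level (n : ℕ) : Prop where
  tu : ∀ μ ν : Fin G.N, (μ : ℕ) < n → (ν : ℕ) < n → W G μ ν ∈ MR G n μ
  conu : ∀ μ : Fin G.N, (μ : ℕ) < n → ∀ m : ℕ, W G μ μ ≤ m → m ∈ MR G n μ
  sbv : ∀ x y : Fin G.N, ∀ c d : ℕ, adjL G n x y → Nat.Coprime c d → 1 ≤ c → 1 ≤ d →
      ∀ ν : Fin G.N, (ν : ℕ) < n → c * W G x ν + d * W G y ν ∈ MSB G n x y c d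
  f3 : ∀ x y : Fin G.N, ∀ c d : ℕ, adjL G n x y → Nat.Coprime c d → 1 ≤ c → 1 ≤ d →
      c * W G x x + d * W G x y + d ∈ MSB G n x y c d
  f5 : ∀ x y : Fin G.N, ∀ c d : ℕ, adjL G n x y → Nat.Coprime c d → 1 ≤ c → 1 ≤ d →
      c * W G x x + d * W G x y + (c * W G x y + d * W G y y) + c ∈ MSB G n x y c d
  sbc : ∀ x y : Fin G.N, ∀ c d : ℕ, adjL G n x y → Nat.Coprime c d → 1 ≤ c → 1 ≤ d →
      ∀ m : ℕ, bigB G x y c d ≤ m → m ∈ MSB G n x y c d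

/-! ### coprimality helpers -/

lemma copAdd {c d : ℕ} (h : Nat.Coprime c d) : Nat.Coprime (c + d) d := by
  simpa using (Nat.coprime_add_self_left (m := c) (n := d)).2 h

lemma copAdd' {c d : ℕ} (h : Nat.Coprime c d) : Nat.Coprime d (c + d) :=
  (copAdd h).symm

lemma copAdd2 {c d : ℕ} (h : Nat.Coprime c d) : Nat.Coprime (c + d) c := by
  have := copAdd h.symm
  rwa [Nat.add_comm d c] at this

lemma copAdd2' {c d : ℕ} (h : Nat.Coprime c d) : Nat.Coprime c (c + d) :=
  (copAdd2 h).symm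

namespace FreeL
variable {G : DualGraph} {v τ : Fin G.N}

lemma lt (hU : U G v = {τ}) : (τ : ℕ) < (v : ℕ) := U_lt (hU ▸ Finset.mem_singleton_self τ)

lemma W_eq (hU : U G v = {τ}) {ν : Fin G.N} (hν : (ν : ℕ) < (v : ℕ)) :
    W G v ν = W G τ ν := by
  rw [W_last G hν, hU, Finset.sum_singleton]

lemma W_eq' (hU : U G v = {τ}) {ν : Fin G.N} (hν : (ν : ℕ) < (v : ℕ)) :
    W G ν v = W G τ ν := by
  rw [W_comm]; exact W_eq hU hν

lemma W_self (hU : U G v = {τ}) : W G v v = 1 + W G τ τ := by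
  rw [W_last_self, hU]; simp

end FreeL

namespace SatL
variable {G : DualGraph} {v a b : Fin G.N}

lemma lt_a (hU : U G v = {a, b}) : (a : ℕ) < (v : ℕ) :=
  U_lt (hU ▸ Finset.mem_insert_self a {b})
lemma lt_b (hU : U G v = {a, b}) : (b : ℕ) < (v : ℕ) :=
  U_lt (hU ▸ Finset.mem_insert_of_mem (Finset.mem_singleton_self b))

lemma W_eq (hab : a ≠ b) (hU : U G v = {a, b}) {ν : Fin G.N} (hν : (ν : ℕ) < (v : ℕ)) :
    W G v ν = W G a ν + W G b ν := by
  rw [W_last G hν, hU, Finset.sum_pair hab]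

lemma W_eq' (hab : a ≠ b) (hU : U G v = {a, b}) {ν : Fin G.N} (hν : (ν : ℕ) < (v : ℕ)) :
    W G ν v = W G a ν + W G b ν := by
  rw [W_comm]; exact W_eq hab hU hν

lemma W_self (hab : a ≠ b) (hU : U G v = {a, b}) :
    W G v v = 1 + W G a a + 2 * W G a b + W G b b := by
  rw [W_last_self, hU, Finset.sum_pair hab, Finset.sum_pair hab, Finset.sum_pair hab,
    W_comm G b a]
  ring

end SatL

/-! ### the induction step, free case -/

section FreeStep

variable {G : DualGraph} {n : ℕ} {v τ : Fin G.N}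

lemma free_step (hv : (v : ℕ) = n) (hU : U G v = {τ}) (IH : Level G n) :
    Level G (n+1) := by
  have hτ : (τ : ℕ) < n := by have := FreeL.lt hU; omega
  have hWv : ∀ ν : Fin G.N, (ν : ℕ) < n → W G v ν = W G τ ν :=
    fun ν h => FreeL.W_eq hU (by omega)
  have hWv' : ∀ μ : Fin G.N, (μ : ℕ) < n → W G μ v = W G μ τ := fun μ h => by
    rw [FreeL.W_eq' hU (by omega), W_comm]
  have hWvv : W G v v = 1 + W G τ τ := FreeL.W_self hU
  have hEndv : EndL G (n+1) v := (EndL_succ_v hv).2 (by rw [hU]; simp)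
  have hvne : ∀ μ : Fin G.N, (μ : ℕ) < n → v ≠ μ := fun μ h hh => by
    rw [← hh] at h; omega
  have hEnd : ∀ σ : Fin G.N, EndL G n σ → σ ≠ τ → EndL G (n+1) σ := by
    intro σ hE hστ
    refine ⟨by have := hE.1; omega, le_trans (Finset.card_le_card ?_) hE.2⟩
    intro y hy
    rw [mem_nbr] at *
    rcases Nat.lt_or_ge (y : ℕ) n with h | h
    · exact ((adjL_succ_iff hv hE.1 h).1 hy).1
    · exfalso
      have hyv : y = v := Fin.ext (by have := hy.2.2.1; omega)
      rw [hyv] at hy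
      have hmem : σ ∈ U G v := (adjL_succ_new hv hE.1).1 hy
      rw [hU, Finset.mem_singleton] at hmem
      exact hστ hmem
  have hRmono : ∀ μ : Fin G.N, (μ : ℕ) < n → rowSet G n μ ⊆ rowSet G (n+1) μ := by
    rintro μ hμ m ⟨σ, hσE, hσμ, rfl⟩
    by_cases hστ : σ = τ
    · subst hστ
      exact ⟨v, hEndv, hvne μ hμ, hWv' μ hμ⟩
    · exact ⟨σ, hEnd σ hσE hστ, hσμ, rfl⟩
  have hMRmono : ∀ μ : Fin G.N, (μ : ℕ) < n → MR G n μ ≤ MR G (n+1) μ :=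
    fun μ hμ => AddSubmonoid.closure_mono (hRmono μ hμ)
  have hRτv : rowSet G n τ ⊆ rowSet G (n+1) v := by
    rintro m ⟨σ, hσE, hστ, rfl⟩
    refine ⟨σ, hEnd σ hσE hστ, ?_, hWv σ hσE.1⟩
    intro hh; rw [hh] at hσE; have := hσE.1; omega
  have hMRτv : MR G n τ ≤ MR G (n+1) v := AddSubmonoid.closure_mono hRτv
  have hSmono : ∀ (x y : Fin G.N) (c d : ℕ), (x : ℕ) < n → (y : ℕ) < n →
      sbSet G n x y c d ⊆ sbSet G (n+1) x y c d := by
    rintro x y c d hx hy m ⟨σ, hσE, rfl⟩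
    by_cases hστ : σ = τ
    · subst hστ
      exact ⟨v, hEndv, by rw [hWv' x hx, hWv' y hy]⟩
    · exact ⟨σ, hEnd σ hσE hστ, rfl⟩
  have hMSmono : ∀ (x y : Fin G.N) (c d : ℕ), (x : ℕ) < n → (y : ℕ) < n →
      MSB G n x y c d ≤ MSB G (n+1) x y c d :=
    fun x y c d hx hy => AddSubmonoid.closure_mono (hSmono x y c d hx hy)
  have hedge : ∀ x y : Fin G.N, adjL G (n+1) x y →
      ((x : ℕ) < n ∧ (y : ℕ) < n ∧ adjL G n x y) ∨ (τ = x ∧ v = y) ∨ (v = x ∧ τ = y) := by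
    intro x y h
    have hx := h.2.1; have hy := h.2.2.1
    rcases Nat.lt_or_ge (x : ℕ) n with hx' | hx'
    · rcases Nat.lt_or_ge (y : ℕ) n with hy' | hy'
      · exact Or.inl ⟨hx', hy', ((adjL_succ_iff hv hx' hy').1 h).1⟩
      · have hyv : y = v := Fin.ext (by omega)
        rw [hyv] at h
        have hm := (adjL_succ_new hv hx').1 h
        rw [hU, Finset.mem_singleton] at hm
        exact Or.inr (Or.inl ⟨hm.symm, hyv.symm⟩)
    · have hxv : x = v := Fin.ext (by omega)
      rcases Nat.lt_or_ge (y : ℕ) n with hy' | hy'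
      · rw [hxv] at h
        have hm := (adjL_succ_new hv hy').1 (adjL_symm h)
        rw [hU, Finset.mem_singleton] at hm
        exact Or.inr (Or.inr ⟨hxv.symm, hm.symm⟩)
      · exact absurd (Fin.ext (by omega) : x = y) h.1
  have genOld : ∀ (c d : ℕ) (σ : Fin G.N), EndL G n σ → σ ≠ τ →
      (c + d) * W G τ σ ∈ sbSet G (n+1) τ v c d := by
    intro c d σ hσ hστ
    exact ⟨σ, hEnd σ hσ hστ, by rw [hWv σ hσ.1]; ring⟩
  have genOld' : ∀ (c d : ℕ) (σ : Fin G.N), EndL G n σ → σ ≠ τ →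
      (c + d) * W G τ σ ∈ sbSet G (n+1) v τ c d := by
    intro c d σ hσ hστ
    exact ⟨σ, hEnd σ hσ hστ, by rw [hWv σ hσ.1]; ring⟩
  have genV : ∀ c d : ℕ, ((c + d) * W G τ τ + d) ∈ sbSet G (n+1) τ v c d := by
    intro c d
    refine ⟨v, hEndv, ?_⟩
    rw [hWv' τ hτ, hWvv]; ring
  have genV' : ∀ c d : ℕ, ((c + d) * W G τ τ + c) ∈ sbSet G (n+1) v τ c d := by
    intro c d
    refine ⟨v, hEndv, ?_⟩
    rw [hWvv, hWv' τ hτ]; ring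
  have hScaleA : ∀ (c d s : ℕ), s ∈ MR G n τ → (c + d) * s ∈ MSB G (n+1) τ v c d := by
    intro c d s hs
    refine mul_mem_closure_of_forall (c+d) ?_ hs
    rintro m ⟨σ, hσE, hστ, rfl⟩
    exact AddSubmonoid.subset_closure (genOld c d σ hσE hστ)
  have hScaleB : ∀ (c d s : ℕ), s ∈ MR G n τ → (c + d) * s ∈ MSB G (n+1) v τ c d := by
    intro c d s hs
    refine mul_mem_closure_of_forall (c+d) ?_ hs
    rintro m ⟨σ, hσE, hστ, rfl⟩
    exact AddSubmonoid.subset_closure (genOld' c d σ hσE hστ)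
  constructor
  -- tu
  · intro μ ν hμ hν
    rcases Nat.lt_or_ge (μ : ℕ) n with hμ' | hμ'
    · rcases Nat.lt_or_ge (ν : ℕ) n with hν' | hν'
      · exact hMRmono μ hμ' (IH.tu μ ν hμ' hν')
      · have hνv : v = ν := Fin.ext (by omega)
        subst hνv
        rw [hWv' μ hμ']
        exact hMRmono μ hμ' (IH.tu μ τ hμ' hτ)
    · have hμv : v = μ := Fin.ext (by omega)
      subst hμv
      rcases Nat.lt_or_ge (ν : ℕ) n with hν' | hν'
      · rw [hWv ν hν']
        exact hMRτv (IH.tu τ ν hτ hν')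
      · have hνv : v = ν := Fin.ext (by omega)
        subst hνv
        rw [hWvv]
        exact hMRτv (IH.conu τ hτ (1 + W G τ τ) (by omega))
  -- conu
  · intro μ hμ m hm
    rcases Nat.lt_or_ge (μ : ℕ) n with hμ' | hμ'
    · exact hMRmono μ hμ' (IH.conu μ hμ' m hm)
    · have hμv : v = μ := Fin.ext (by omega)
      subst hμv
      rw [hWvv] at hm
      exact hMRτv (IH.conu τ hτ m (by omega))
  -- sbv
  · intro x y c d hadj hco hc hd ν hν
    rcases hedge x y hadj with ⟨hx, hy, hadjn⟩ | ⟨hx, hy⟩ | ⟨hx, hy⟩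
    · rcases Nat.lt_or_ge (ν : ℕ) n with hν' | hν'
      · exact hMSmono x y c d hx hy (IH.sbv x y c d hadjn hco hc hd ν hν')
      · have hνv : v = ν := Fin.ext (by omega)
        subst hνv
        rw [hWv' x hx, hWv' y hy]
        exact hMSmono x y c d hx hy (IH.sbv x y c d hadjn hco hc hd τ hτ)
    · subst hx; subst hy
      rcases Nat.lt_or_ge (ν : ℕ) n with hν' | hν'
      · have heq : c * W G τ ν + d * W G v ν = (c+d) * W G τ ν := by
          rw [hWv ν hν']; ring
        rw [heq]
        exact hScaleA c d _ (IH.tu τ ν hτ hν')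
      · have hνv : v = ν := Fin.ext (by omega)
        subst hνv
        have heq : c * W G τ v + d * W G v v = (c+d) * W G τ τ + d := by
          rw [hWv' τ hτ, hWvv]; ring
        rw [heq]
        exact AddSubmonoid.subset_closure (genV c d)
    · subst hx; subst hy
      rcases Nat.lt_or_ge (ν : ℕ) n with hν' | hν'
      · have heq : c * W G v ν + d * W G τ ν = (c+d) * W G τ ν := by
          rw [hWv ν hν']; ring
        rw [heq]
        exact hScaleB c d _ (IH.tu τ ν hτ hν')
      · have hνv : v = ν := Fin.ext (by omega)
        subst hνv
        have heq : c * W G v v + d * W G τ v = (c+d) * W G τ τ + c := by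
          rw [hWvv, hWv' τ hτ]; ring
        rw [heq]
        exact AddSubmonoid.subset_closure (genV' c d)
  -- f3
  · intro x y c d hadj hco hc hd
    rcases hedge x y hadj with ⟨hx, hy, hadjn⟩ | ⟨hx, hy⟩ | ⟨hx, hy⟩
    · exact hMSmono x y c d hx hy (IH.f3 x y c d hadjn hco hc hd)
    · subst hx; subst hy
      have heq : c * W G τ τ + d * W G τ v + d = (c+d) * W G τ τ + d := by
        rw [hWv' τ hτ]; ring
      rw [heq]; exact AddSubmonoid.subset_closure (genV c d)
    · subst hx; subst hy
      have heq : c * W G v v + d * W G v τ + d = (c+d) * (1 + W G τ τ) := by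
        rw [hWvv, hWv τ hτ]; ring
      rw [heq]
      exact hScaleB c d _ (IH.conu τ hτ (1 + W G τ τ) (by omega))
  -- f5
  · intro x y c d hadj hco hc hd
    rcases hedge x y hadj with ⟨hx, hy, hadjn⟩ | ⟨hx, hy⟩ | ⟨hx, hy⟩
    · exact hMSmono x y c d hx hy (IH.f5 x y c d hadjn hco hc hd)
    · subst hx; subst hy
      have heq : c * W G τ τ + d * W G τ v + (c * W G τ v + d * W G v v) + c
          = (c+d) * (2 * W G τ τ + 1) := by
        rw [hWv' τ hτ, hWvv]; ring
      rw [heq]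
      exact hScaleA c d _ (IH.conu τ hτ (2 * W G τ τ + 1) (by omega))
    · subst hx; subst hy
      have heq : c * W G v v + d * W G v τ + (c * W G v τ + d * W G τ τ) + c
          = 2 * ((c+d) * W G τ τ + c) := by
        rw [hWvv, hWv τ hτ]; ring
      rw [heq]
      exact nsmul_mem' _ (AddSubmonoid.subset_closure (genV' c d)) 2
  -- sbc
  · intro x y c d hadj hco hc hd m hm
    rcases hedge x y hadj with ⟨hx, hy, hadjn⟩ | ⟨hx, hy⟩ | ⟨hx, hy⟩
    · exact hMSmono x y c d hx hy (IH.sbc x y c d hadjn hco hc hd m hm)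
    · subst hx; subst hy
      have hBval : bigB G τ v c d = (c+d) * ((c+d) * W G τ τ + d) := by
        unfold bigB
        rw [hWv' τ hτ, hWvv]; ring
      rw [hBval] at hm
      have ha2 : 2 ≤ c + d := by omega
      have hcob : Nat.Coprime ((c+d) * W G τ τ + d) (c+d) := by
        have h1 : Nat.Coprime d (c+d) := copAdd' hco
        have heq : (c+d) * W G τ τ + d = d + (c+d) * W G τ τ := by ring
        rw [heq]
        exact (Nat.coprime_add_mul_left_left _ _ (W G τ τ)).2 h1
      obtain ⟨t, s, hsw, hts⟩ := euclid_conductor (w := W G τ τ) ha2 (by omega) hcob hm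
      have hsmem : s ∈ MR G n τ := IH.conu τ hτ s hsw
      rw [hts]
      exact AddSubmonoid.add_mem _
        (nsmul_mem' _ (AddSubmonoid.subset_closure (genV c d)) t)
        (hScaleA c d s hsmem)
    · subst hx; subst hy
      have hBval : bigB G v τ c d = (c+d) * ((c+d) * W G τ τ + c) := by
        unfold bigB
        rw [hWvv, hWv τ hτ]; ring
      rw [hBval] at hm
      have ha2 : 2 ≤ c + d := by omega
      have hcob : Nat.Coprime ((c+d) * W G τ τ + c) (c+d) := by
        have h1 : Nat.Coprime c (c+d) := copAdd2' hco
        have heq : (c+d) * W G τ τ + c = c + (c+d) * W G τ τ := by ring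
        rw [heq]
        exact (Nat.coprime_add_mul_left_left _ _ (W G τ τ)).2 h1
      obtain ⟨t, s, hsw, hts⟩ := euclid_conductor (w := W G τ τ) ha2 (by omega) hcob hm
      have hsmem : s ∈ MR G n τ := IH.conu τ hτ s hsw
      rw [hts]
      exact AddSubmonoid.add_mem _
        (nsmul_mem' _ (AddSubmonoid.subset_closure (genV' c d)) t)
        (hScaleB c d s hsmem)

end FreeStep


/-! ### the induction step, satellite case -/

section SatStep

variable {G : DualGraph} {n : ℕ} {v : Fin G.N}

lemma sat_edges {p q : Fin G.N} (hv : (v : ℕ) = n) (hpq : p ≠ q)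
    (hU : U G v = {p, q}) (IH : Level G n)
    (hEnd : ∀ σ : Fin G.N, EndL G n σ → EndL G (n+1) σ) :
    ∀ c d : ℕ, Nat.Coprime c d → 1 ≤ c → 1 ≤ d →
      (∀ ν : Fin G.N, (ν : ℕ) < n+1 → c * W G p ν + d * W G v ν ∈ MSB G (n+1) p v c d) ∧
      (∀ ν : Fin G.N, (ν : ℕ) < n+1 → c * W G v ν + d * W G p ν ∈ MSB G (n+1) v p c d) ∧
      (c * W G p p + d * W G p v + d ∈ MSB G (n+1) p v c d) ∧
      (c * W G v v + d * W G v p + d ∈ MSB G (n+1) v p c d) ∧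
      (c * W G p p + d * W G p v + (c * W G p v + d * W G v v) + c ∈ MSB G (n+1) p v c d) ∧
      (c * W G v v + d * W G v p + (c * W G v p + d * W G p p) + c ∈ MSB G (n+1) v p c d) ∧
      (∀ m : ℕ, bigB G p v c d ≤ m → m ∈ MSB G (n+1) p v c d) ∧
      (∀ m : ℕ, bigB G v p c d ≤ m → m ∈ MSB G (n+1) v p c d) := by
  have hp : (p : ℕ) < n := by have := SatL.lt_a hU; omega
  have hq : (q : ℕ) < n := by have := SatL.lt_b hU; omega
  have hpp : G.prox v p := mem_U.1 (by rw [hU]; exact Finset.mem_insert_self _ _)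
  have hpq2 : G.prox v q := mem_U.1
    (by rw [hU]; exact Finset.mem_insert_of_mem (Finset.mem_singleton_self q))
  have hadj : adjL G n p q := by
    obtain ⟨hpat, hkill⟩ := G.prox_pair hpp hpq2 hpq
    exact ⟨hpq, hp, hq, hpat, fun k hk => hkill k (by rw [Fin.lt_def]; omega)⟩
  have hadj' : adjL G n q p := adjL_symm hadj
  have hWrow : ∀ ν : Fin G.N, (ν : ℕ) < n → W G v ν = W G p ν + W G q ν :=
    fun ν h => SatL.W_eq hpq hU (by omega)
  have hWrow' : ∀ μ : Fin G.N, (μ : ℕ) < n → W G μ v = W G p μ + W G q μ :=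
    fun μ h => SatL.W_eq' hpq hU (by omega)
  have hWvv : W G v v = 1 + W G p p + 2 * W G p q + W G q q := SatL.W_self hpq hU
  have hWqp : W G q p = W G p q := W_comm G q p
  have sub1 : ∀ c d : ℕ, sbSet G n p q (c+d) d ⊆ sbSet G (n+1) p v c d := by
    rintro c d m ⟨σ, hσ, rfl⟩
    exact ⟨σ, hEnd σ hσ, by rw [hWrow σ hσ.1]; ring⟩
  have sub2 : ∀ c d : ℕ, sbSet G n p q (c+d) c ⊆ sbSet G (n+1) v p c d := by
    rintro c d m ⟨σ, hσ, rfl⟩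
    exact ⟨σ, hEnd σ hσ, by rw [hWrow σ hσ.1]; ring⟩
  have hM1 : ∀ c d : ℕ, MSB G n p q (c+d) d ≤ MSB G (n+1) p v c d :=
    fun c d => AddSubmonoid.closure_mono (sub1 c d)
  have hM2 : ∀ c d : ℕ, MSB G n p q (c+d) c ≤ MSB G (n+1) v p c d :=
    fun c d => AddSubmonoid.closure_mono (sub2 c d)
  intro c d hco hc hd
  have co1 : Nat.Coprime (c+d) d := copAdd hco
  have co2 : Nat.Coprime (c+d) c := copAdd2 hco
  have co1' : Nat.Coprime d (c+d) := copAdd' hco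
  have co2' : Nat.Coprime c (c+d) := copAdd2' hco
  refine ⟨?_, ?_, ?_, ?_, ?_, ?_, ?_, ?_⟩
  · -- sbv (p,v)
    intro ν hν
    rcases Nat.lt_or_ge (ν : ℕ) n with h | h
    · have heq : c * W G p ν + d * W G v ν = (c+d) * W G p ν + d * W G q ν := by
        rw [hWrow ν h]; ring
      rw [heq]
      exact hM1 c d (IH.sbv p q (c+d) d hadj co1 (by omega) hd ν h)
    · have hνv : v = ν := Fin.ext (by omega)
      subst hνv
      have heq : c * W G p v + d * W G v v
          = d * W G q q + (c+d) * W G q p + (d * W G q p + (c+d) * W G p p) + d := by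
        rw [hWrow' p hp, hWvv, hWqp]; ring
      rw [heq]
      have hmem := IH.f5 q p d (c+d) hadj' co1' hd (by omega)
      rw [MSB_comm G n q p d (c+d)] at hmem
      exact hM1 c d hmem
  · -- sbv (v,p)
    intro ν hν
    rcases Nat.lt_or_ge (ν : ℕ) n with h | h
    · have heq : c * W G v ν + d * W G p ν = (c+d) * W G p ν + c * W G q ν := by
        rw [hWrow ν h]; ring
      rw [heq]
      exact hM2 c d (IH.sbv p q (c+d) c hadj co2 (by omega) hc ν h)
    · have hνv : v = ν := Fin.ext (by omega)
      subst hνv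
      have heq : c * W G v v + d * W G p v
          = c * W G q q + (c+d) * W G q p + (c * W G q p + (c+d) * W G p p) + c := by
        rw [hWvv, hWrow' p hp, hWqp]; ring
      rw [heq]
      have hmem := IH.f5 q p c (c+d) hadj' co2' hc (by omega)
      rw [MSB_comm G n q p c (c+d)] at hmem
      exact hM2 c d hmem
  · -- f3 (p,v)
    have heq : c * W G p p + d * W G p v + d = (c+d) * W G p p + d * W G p q + d := by
      rw [hWrow' p hp, hWqp]; ring
    rw [heq]
    exact hM1 c d (IH.f3 p q (c+d) d hadj co1 (by omega) hd)
  · -- f3 (v,p)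
    have heq : c * W G v v + d * W G v p + d
        = (c+d) * W G p p + c * W G p q + ((c+d) * W G p q + c * W G q q) + (c+d) := by
      rw [hWvv, hWrow p hp, hWqp]; ring
    rw [heq]
    exact hM2 c d (IH.f5 p q (c+d) c hadj co2 (by omega) hc)
  · -- f5 (p,v)
    have heq : c * W G p p + d * W G p v + (c * W G p v + d * W G v v) + c
        = ((c+d) * W G p p + d * W G p q + ((c+d) * W G p q + d * W G q q) + (c+d))
          + ((c+d) * W G p p + d * W G q p) := by
      rw [hWrow' p hp, hWvv, hWqp]; ring
    rw [heq]
    exact AddSubmonoid.add_mem _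
      (hM1 c d (IH.f5 p q (c+d) d hadj co1 (by omega) hd))
      (hM1 c d (IH.sbv p q (c+d) d hadj co1 (by omega) hd p hp))
  · -- f5 (v,p)
    have heq : c * W G v v + d * W G v p + (c * W G v p + d * W G p p) + c
        = (c * W G q q + (c+d) * W G q p + (c * W G q p + (c+d) * W G p p) + c)
          + ((c+d) * W G p p + c * W G p q + c) := by
      rw [hWvv, hWrow p hp, hWqp]; ring
    rw [heq]
    have hmem := IH.f5 q p c (c+d) hadj' co2' hc (by omega)
    rw [MSB_comm G n q p c (c+d)] at hmem
    exact AddSubmonoid.add_mem _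
      (hM2 c d hmem)
      (hM2 c d (IH.f3 p q (c+d) c hadj co2 (by omega) hc))
  · -- sbc (p,v)
    intro m hm
    have heq : bigB G p v c d = bigB G p q (c+d) d := by
      unfold bigB
      rw [hWrow' p hp, hWvv, hWqp]; ring
    rw [heq] at hm
    exact hM1 c d (IH.sbc p q (c+d) d hadj co1 (by omega) hd m hm)
  · -- sbc (v,p)
    intro m hm
    have heq : bigB G v p c d = bigB G p q (c+d) c := by
      unfold bigB
      rw [hWvv, hWrow p hp, hWqp]; ring
    rw [heq] at hm
    exact hM2 c d (IH.sbc p q (c+d) c hadj co2 (by omega) hc m hm)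

lemma sat_step {a b : Fin G.N} (hv : (v : ℕ) = n) (hab : a ≠ b)
    (hU : U G v = {a, b}) (IH : Level G n) : Level G (n+1) := by
  have ha : (a : ℕ) < n := by have := SatL.lt_a hU; omega
  have hb : (b : ℕ) < n := by have := SatL.lt_b hU; omega
  have hpa : G.prox v a := mem_U.1 (by rw [hU]; exact Finset.mem_insert_self _ _)
  have hpb : G.prox v b := mem_U.1
    (by rw [hU]; exact Finset.mem_insert_of_mem (Finset.mem_singleton_self b))
  have hadjab : adjL G n a b := by
    obtain ⟨hpat, hkill⟩ := G.prox_pair hpa hpb hab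
    exact ⟨hab, ha, hb, hpat, fun k hk => hkill k (by rw [Fin.lt_def]; omega)⟩
  have hWrow : ∀ ν : Fin G.N, (ν : ℕ) < n → W G v ν = W G a ν + W G b ν :=
    fun ν h => SatL.W_eq hab hU (by omega)
  have hWrow' : ∀ μ : Fin G.N, (μ : ℕ) < n → W G μ v = W G a μ + W G b μ :=
    fun μ h => SatL.W_eq' hab hU (by omega)
  have hWvv : W G v v = 1 + W G a a + 2 * W G a b + W G b b := SatL.W_self hab hU
  have hvne : ∀ μ : Fin G.N, (μ : ℕ) < n → v ≠ μ := fun μ h hh => by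
    rw [← hh] at h; omega
  -- end transfer
  have endCase : ∀ p q : Fin G.N, U G v = {p, q} → G.prox v p → G.prox v q →
      adjL G n p q → ∀ σ : Fin G.N, EndL G n σ → σ = p → EndL G (n+1) σ := by
    intro p q hU' hp' hq' hadj σ hE hσp
    refine ⟨by have := hE.1; omega, ?_⟩
    rw [hσp] at hE ⊢
    have hpn : (p : ℕ) < n := hE.1
    have hmemb : q ∈ nbr G n p := mem_nbr.2 hadj
    have huniq := Finset.card_le_one.1 hE.2
    have hsub : nbr G (n+1) p ⊆ {v} := by
      intro y hy
      rw [mem_nbr] at hy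
      rcases Nat.lt_or_ge (y : ℕ) n with h | h
      · exfalso
        have h' := (adjL_succ_iff hv hpn h).1 hy
        have hyq : y = q := huniq y (mem_nbr.2 h'.1) q hmemb
        exact h'.2 ⟨hp', by rw [hyq]; exact hq'⟩
      · have : y = v := Fin.ext (by have := hy.2.2.1; omega)
        simp [this]
    calc (nbr G (n+1) p).card ≤ ({v} : Finset (Fin G.N)).card := Finset.card_le_card hsub
      _ = 1 := Finset.card_singleton v
  have hEnd : ∀ σ : Fin G.N, EndL G n σ → EndL G (n+1) σ := by
    intro σ hE
    by_cases hσa : σ = a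
    · exact endCase a b hU hpa hpb hadjab σ hE hσa
    by_cases hσb : σ = b
    · exact endCase b a (by rw [hU, Finset.pair_comm]) hpb hpa (adjL_symm hadjab) σ hE hσb
    refine ⟨by have := hE.1; omega, le_trans (Finset.card_le_card ?_) hE.2⟩
    intro y hy
    rw [mem_nbr] at *
    rcases Nat.lt_or_ge (y : ℕ) n with h | h
    · exact ((adjL_succ_iff hv hE.1 h).1 hy).1
    · exfalso
      have hyv : y = v := Fin.ext (by have := hy.2.2.1; omega)
      rw [hyv] at hy
      have hmem : σ ∈ U G v := (adjL_succ_new hv hE.1).1 hy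
      rw [hU] at hmem
      rcases Finset.mem_insert.1 hmem with h' | h'
      · exact hσa h'
      · exact hσb (Finset.mem_singleton.1 h')
  -- edge classification
  have hedge : ∀ x y : Fin G.N, adjL G (n+1) x y →
      ((x : ℕ) < n ∧ (y : ℕ) < n ∧ adjL G n x y) ∨
      (v = y ∧ (a = x ∨ b = x)) ∨ (v = x ∧ (a = y ∨ b = y)) := by
    intro x y h
    have hx := h.2.1; have hy := h.2.2.1
    rcases Nat.lt_or_ge (x : ℕ) n with hx' | hx'
    · rcases Nat.lt_or_ge (y : ℕ) n with hy' | hy'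
      · exact Or.inl ⟨hx', hy', ((adjL_succ_iff hv hx' hy').1 h).1⟩
      · have hyv : y = v := Fin.ext (by omega)
        rw [hyv] at h
        have hm := (adjL_succ_new hv hx').1 h
        rw [hU] at hm
        rcases Finset.mem_insert.1 hm with h' | h'
        · exact Or.inr (Or.inl ⟨hyv.symm, Or.inl h'.symm⟩)
        · exact Or.inr (Or.inl ⟨hyv.symm, Or.inr (Finset.mem_singleton.1 h').symm⟩)
    · have hxv : x = v := Fin.ext (by omega)
      rcases Nat.lt_or_ge (y : ℕ) n with hy' | hy'
      · rw [hxv] at h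
        have hm := (adjL_succ_new hv hy').1 (adjL_symm h)
        rw [hU] at hm
        rcases Finset.mem_insert.1 hm with h' | h'
        · exact Or.inr (Or.inr ⟨hxv.symm, Or.inl h'.symm⟩)
        · exact Or.inr (Or.inr ⟨hxv.symm, Or.inr (Finset.mem_singleton.1 h').symm⟩)
      · exact absurd (Fin.ext (by omega) : x = y) h.1
  -- monotone transfers
  have hRmono : ∀ μ : Fin G.N, rowSet G n μ ⊆ rowSet G (n+1) μ := by
    rintro μ m ⟨σ, h1, h2, h3⟩
    exact ⟨σ, hEnd σ h1, h2, h3⟩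
  have hMRmono : ∀ μ : Fin G.N, MR G n μ ≤ MR G (n+1) μ :=
    fun μ => AddSubmonoid.closure_mono (hRmono μ)
  have hSmono : ∀ (x y : Fin G.N) (c d : ℕ), sbSet G n x y c d ⊆ sbSet G (n+1) x y c d := by
    rintro x y c d m ⟨σ, h1, h2⟩
    exact ⟨σ, hEnd σ h1, h2⟩
  have hMSmono : ∀ (x y : Fin G.N) (c d : ℕ), MSB G n x y c d ≤ MSB G (n+1) x y c d :=
    fun x y c d => AddSubmonoid.closure_mono (hSmono x y c d)
  have hsub11 : sbSet G n a b 1 1 ⊆ rowSet G (n+1) v := by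
    rintro m ⟨σ, hσ, rfl⟩
    refine ⟨σ, hEnd σ hσ, fun hh => by rw [hh] at hσ; have := hσ.1; omega, ?_⟩
    rw [hWrow σ hσ.1]; ring
  have hBeq : bigB G a b 1 1 = W G v v := by
    unfold bigB; rw [hWvv]; ring
  have co11 : Nat.Coprime 1 1 := Nat.coprime_one_left 1
  have keyAB := sat_edges hv hab hU IH hEnd
  have keyBA := sat_edges hv hab.symm (by rw [hU, Finset.pair_comm]) IH hEnd
  constructor
  -- tu
  · intro μ ν hμ hν
    rcases Nat.lt_or_ge (μ : ℕ) n with hμ' | hμ'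
    · rcases Nat.lt_or_ge (ν : ℕ) n with hν' | hν'
      · exact hMRmono μ (IH.tu μ ν hμ' hν')
      · have hνv : v = ν := Fin.ext (by omega)
        subst hνv
        rw [hWrow' μ hμ', W_comm G a μ, W_comm G b μ]
        exact AddSubmonoid.add_mem _ (hMRmono μ (IH.tu μ a hμ' ha))
          (hMRmono μ (IH.tu μ b hμ' hb))
    · have hμv : v = μ := Fin.ext (by omega)
      subst hμv
      rcases Nat.lt_or_ge (ν : ℕ) n with hν' | hν'
      · have heq : W G v ν = 1 * W G a ν + 1 * W G b ν := by rw [hWrow ν hν']; ring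
        rw [heq]
        exact AddSubmonoid.closure_mono hsub11
          (IH.sbv a b 1 1 hadjab co11 le_rfl le_rfl ν hν')
      · have hνv : v = ν := Fin.ext (by omega)
        subst hνv
        exact AddSubmonoid.closure_mono hsub11
          (IH.sbc a b 1 1 hadjab co11 le_rfl le_rfl (W G v v) (le_of_eq hBeq))
  -- conu
  · intro μ hμ m hm
    rcases Nat.lt_or_ge (μ : ℕ) n with hμ' | hμ'
    · exact hMRmono μ (IH.conu μ hμ' m hm)
    · have hμv : v = μ := Fin.ext (by omega)
      subst hμv
      exact AddSubmonoid.closure_mono hsub11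
        (IH.sbc a b 1 1 hadjab co11 le_rfl le_rfl m (le_trans (le_of_eq hBeq) hm))
  -- sbv
  · intro x y c d hadj hco hc hd ν hν
    rcases hedge x y hadj with ⟨hx, hy, hadjn⟩ | ⟨hyv, hxa | hxb⟩ | ⟨hxv, hya | hyb⟩
    · rcases Nat.lt_or_ge (ν : ℕ) n with hν' | hν'
      · exact hMSmono x y c d (IH.sbv x y c d hadjn hco hc hd ν hν')
      · have hνv : v = ν := Fin.ext (by omega)
        subst hνv
        have heq : c * W G x v + d * W G y v
            = (c * W G x a + d * W G y a) + (c * W G x b + d * W G y b) := by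
          rw [hWrow' x hx, hWrow' y hy, W_comm G a x, W_comm G b x,
            W_comm G a y, W_comm G b y]
          ring
        rw [heq]
        exact AddSubmonoid.add_mem _
          (hMSmono x y c d (IH.sbv x y c d hadjn hco hc hd a ha))
          (hMSmono x y c d (IH.sbv x y c d hadjn hco hc hd b hb))
    · subst hyv; subst hxa
      exact (keyAB c d hco hc hd).1 ν hν
    · subst hyv; subst hxb
      exact (keyBA c d hco hc hd).1 ν hν
    · subst hxv; subst hya
      exact (keyAB c d hco hc hd).2.1 ν hν
    · subst hxv; subst hyb
      exact (keyBA c d hco hc hd).2.1 ν hν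
  -- f3
  · intro x y c d hadj hco hc hd
    rcases hedge x y hadj with ⟨hx, hy, hadjn⟩ | ⟨hyv, hxa | hxb⟩ | ⟨hxv, hya | hyb⟩
    · exact hMSmono x y c d (IH.f3 x y c d hadjn hco hc hd)
    · subst hyv; subst hxa
      exact (keyAB c d hco hc hd).2.2.1
    · subst hyv; subst hxb
      exact (keyBA c d hco hc hd).2.2.1
    · subst hxv; subst hya
      exact (keyAB c d hco hc hd).2.2.2.1
    · subst hxv; subst hyb
      exact (keyBA c d hco hc hd).2.2.2.1
  -- f5
  · intro x y c d hadj hco hc hd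
    rcases hedge x y hadj with ⟨hx, hy, hadjn⟩ | ⟨hyv, hxa | hxb⟩ | ⟨hxv, hya | hyb⟩
    · exact hMSmono x y c d (IH.f5 x y c d hadjn hco hc hd)
    · subst hyv; subst hxa
      exact (keyAB c d hco hc hd).2.2.2.2.1
    · subst hyv; subst hxb
      exact (keyBA c d hco hc hd).2.2.2.2.1
    · subst hxv; subst hya
      exact (keyAB c d hco hc hd).2.2.2.2.2.1
    · subst hxv; subst hyb
      exact (keyBA c d hco hc hd).2.2.2.2.2.1
  -- sbc
  · intro x y c d hadj hco hc hd m hm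
    rcases hedge x y hadj with ⟨hx, hy, hadjn⟩ | ⟨hyv, hxa | hxb⟩ | ⟨hxv, hya | hyb⟩
    · exact hMSmono x y c d (IH.sbc x y c d hadjn hco hc hd m hm)
    · subst hyv; subst hxa
      exact (keyAB c d hco hc hd).2.2.2.2.2.2.1 m hm
    · subst hyv; subst hxb
      exact (keyBA c d hco hc hd).2.2.2.2.2.2.1 m hm
    · subst hxv; subst hya
      exact (keyAB c d hco hc hd).2.2.2.2.2.2.2 m hm
    · subst hxv; subst hyb
      exact (keyBA c d hco hc hd).2.2.2.2.2.2.2 m hm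


end SatStep

/-! ### base case and assembly -/

section Base

variable (G : DualGraph)

lemma level_two (h2 : 2 ≤ G.N) : Level G 2 := by
  set z : Fin G.N := ⟨0, by omega⟩ with hz
  set o : Fin G.N := ⟨1, by omega⟩ with ho
  have hzo : z ≠ o := by
    intro h; rw [Fin.ext_iff] at h; simp [hz, ho] at h
  have hUz : U G z = ∅ := by
    rw [Finset.eq_empty_iff_forall_notMem]
    intro j hj
    have := G.prox_lt (mem_U.1 hj)
    rw [Fin.lt_def] at this
    simp [hz] at this
  have hpoz : G.prox o z := by
    obtain ⟨ν, hν⟩ := G.prox_nonempty o (by simp [ho])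
    have hν1 : ν = z := by
      have := G.prox_lt hν
      rw [Fin.lt_def] at this
      apply Fin.ext
      simp [hz]
      simp [ho] at this
      omega
    rwa [hν1] at hν
  have hUo : U G o = {z} := by
    ext j
    rw [mem_U, Finset.mem_singleton]
    constructor
    · intro hj
      have := G.prox_lt hj
      rw [Fin.lt_def] at this
      apply Fin.ext
      simp [ho] at this
      simp [hz]
      omega
    · intro h; rwa [h]
  have Wzz : W G z z = 1 := by
    rw [W_last_self, hUz]; simp
  have Woz : W G o z = 1 := by
    rw [W_last G (show (z:ℕ) < (o:ℕ) by simp [hz, ho]), hUo, Finset.sum_singleton, Wzz]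
  have Wzo : W G z o = 1 := by rw [W_comm]; exact Woz
  have Woo : W G o o = 2 := by
    rw [W_last_self, hUo]; simp [Wzz]
  have hadj : adjL G 2 z o := by
    refine ⟨hzo, by simp [hz], by simp [ho], Or.inr hpoz, ?_⟩
    intro k hk hc
    have h1 := G.prox_lt hc.1
    rw [Fin.lt_def] at h1
    have hko : k = o := by apply Fin.ext; simp [ho]; simp [hz] at h1; omega
    rw [hko] at hc
    have := G.prox_lt hc.2
    rw [Fin.lt_def] at this
    omega
  have hfin2 : ∀ x : Fin G.N, (x : ℕ) < 2 → x = z ∨ x = o := by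
    intro x hx
    rcases Nat.lt_or_ge (x : ℕ) 1 with h | h
    · exact Or.inl (Fin.ext (by simp [hz]; omega))
    · exact Or.inr (Fin.ext (by simp [ho]; omega))
  have nbrz : nbr G 2 z = {o} := by
    ext y
    rw [mem_nbr, Finset.mem_singleton]
    constructor
    · intro h
      rcases hfin2 y h.2.2.1 with h' | h'
      · exact absurd h'.symm h.1
      · exact h'
    · intro h; rw [h]; exact hadj
  have nbro : nbr G 2 o = {z} := by
    ext y
    rw [mem_nbr, Finset.mem_singleton]
    constructor
    · intro h
      rcases hfin2 y h.2.2.1 with h' | h'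
      · exact h'
      · exact absurd h'.symm h.1
    · intro h; rw [h]; exact adjL_symm hadj
  have hEz : EndL G 2 z := ⟨by simp [hz], by rw [nbrz]; simp⟩
  have hEo : EndL G 2 o := ⟨by simp [ho], by rw [nbro]; simp⟩
  have hEnd2 : ∀ x : Fin G.N, (x : ℕ) < 2 → EndL G 2 x := by
    intro x hx
    rcases hfin2 x hx with h | h <;> rw [h]
    exacts [hEz, hEo]
  have univ1 : ∀ (A : Set ℕ), (1 : ℕ) ∈ A → ∀ m : ℕ, m ∈ AddSubmonoid.closure A := by
    intro A h1 m
    have := nsmul_mem' (AddSubmonoid.closure A) (AddSubmonoid.subset_closure h1) m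
    simpa using this
  have g1 : (1 : ℕ) ∈ rowSet G 2 z := ⟨o, hEo, fun h => hzo h.symm, Wzo⟩
  have g2 : (1 : ℕ) ∈ rowSet G 2 o := ⟨z, hEz, hzo, Woz⟩
  -- which edges exist at level 2
  have hedge2 : ∀ x y : Fin G.N, adjL G 2 x y → (x = z ∧ y = o) ∨ (x = o ∧ y = z) := by
    intro x y h
    rcases hfin2 x h.2.1 with hx | hx <;> rcases hfin2 y h.2.2.1 with hy | hy
    · exact absurd (hx.trans hy.symm) h.1
    · exact Or.inl ⟨hx, hy⟩
    · exact Or.inr ⟨hx, hy⟩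
    · exact absurd (hx.trans hy.symm) h.1
  constructor
  · intro μ ν hμ hν
    rcases hfin2 μ hμ with h | h <;> rw [h]
    exacts [univ1 _ g1 _, univ1 _ g2 _]
  · intro μ hμ m hm
    rcases hfin2 μ hμ with h | h <;> rw [h]
    exacts [univ1 _ g1 _, univ1 _ g2 _]
  · intro x y c d hadj' hco hc hd ν hν
    refine AddSubmonoid.subset_closure ?_
    exact ⟨ν, hEnd2 ν hν, rfl⟩
  · intro x y c d hadj' hco hc hd
    rcases hedge2 x y hadj' with ⟨hx, hy⟩ | ⟨hx, hy⟩ <;> subst hx <;> subst hy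
    · have heq : c * W G z z + d * W G z o + d = c * W G z o + d * W G o o := by
        rw [Wzz, Wzo, Woo]; ring
      rw [heq]
      refine AddSubmonoid.subset_closure ?_
      exact ⟨o, hEo, rfl⟩
    · have heq : c * W G o o + d * W G o z + d = 2 * (c * W G o z + d * W G z z) := by
        rw [Woo, Woz, Wzz]; ring
      rw [heq]
      have hgen : c * W G o z + d * W G z z ∈ sbSet G 2 o z c d := ⟨z, hEz, rfl⟩
      exact nsmul_mem' _ (AddSubmonoid.subset_closure hgen) 2
  · intro x y c d hadj' hco hc hd
    rcases hedge2 x y hadj' with ⟨hx, hy⟩ | ⟨hx, hy⟩ <;> subst hx <;> subst hy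
    · have heq : c * W G z z + d * W G z o + (c * W G z o + d * W G o o) + c
          = 3 * (c * W G z z + d * W G o z) := by
        rw [Wzz, Wzo, Woo, Woz]; ring
      rw [heq]
      have hgen : c * W G z z + d * W G o z ∈ sbSet G 2 z o c d := ⟨z, hEz, rfl⟩
      exact nsmul_mem' _ (AddSubmonoid.subset_closure hgen) 3
    · have heq : c * W G o o + d * W G o z + (c * W G o z + d * W G z z) + c
          = 2 * (c * W G o o + d * W G z o) := by
        rw [Wzz, Wzo, Woo, Woz]; ring
      rw [heq]
      have hgen : c * W G o o + d * W G z o ∈ sbSet G 2 o z c d := ⟨o, hEo, rfl⟩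
      exact nsmul_mem' _ (AddSubmonoid.subset_closure hgen) 2
  · intro x y c d hadj' hco hc hd m hm
    rcases hedge2 x y hadj' with ⟨hx, hy⟩ | ⟨hx, hy⟩ <;> subst hx <;> subst hy
    · have hB : bigB G z o c d = (c+d) * (c+2*d) := by
        unfold bigB; rw [Wzz, Wzo, Woo]; ring
      rw [hB] at hm
      have hcob : Nat.Coprime (c+2*d) (c+d) := by
        have h1 : Nat.Coprime d (c+d) := copAdd' hco
        have heq : c + 2*d = d + (c+d) * 1 := by ring
        rw [heq]
        exact (Nat.coprime_add_mul_left_left _ _ 1).2 h1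
      obtain ⟨t, s, hsw, hts⟩ := euclid_conductor (w := 1) (by omega) (by omega) hcob hm
      rw [hts]
      refine AddSubmonoid.add_mem _ ?_ ?_
      · have hgen : (c + 2*d : ℕ) ∈ sbSet G 2 z o c d :=
          ⟨o, hEo, by rw [Wzo, Woo]; ring⟩
        exact nsmul_mem' _ (AddSubmonoid.subset_closure hgen) t
      · have hgen : (c + d : ℕ) ∈ sbSet G 2 z o c d :=
          ⟨z, hEz, by rw [Wzz, Woz]; ring⟩
        have hmm := nsmul_mem' _ (AddSubmonoid.subset_closure hgen) s
        rwa [Nat.mul_comm] at hmm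
    · have hB : bigB G o z c d = (c+d) * (2*c+d) := by
        unfold bigB; rw [Woo, Woz, Wzz]; ring
      rw [hB] at hm
      have hcob : Nat.Coprime (2*c+d) (c+d) := by
        have h1 : Nat.Coprime c (c+d) := copAdd2' hco
        have heq : 2*c + d = c + (c+d) * 1 := by ring
        rw [heq]
        exact (Nat.coprime_add_mul_left_left _ _ 1).2 h1
      obtain ⟨t, s, hsw, hts⟩ := euclid_conductor (w := 1) (by omega) (by omega) hcob hm
      rw [hts]
      refine AddSubmonoid.add_mem _ ?_ ?_
      · have hgen : (2*c + d : ℕ) ∈ sbSet G 2 o z c d :=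
          ⟨o, hEo, by rw [Woo, Wzo]; ring⟩
        exact nsmul_mem' _ (AddSubmonoid.subset_closure hgen) t
      · have hgen : (c + d : ℕ) ∈ sbSet G 2 o z c d :=
          ⟨z, hEz, by rw [Woz, Wzz]; ring⟩
        have hmm := nsmul_mem' _ (AddSubmonoid.subset_closure hgen) s
        rwa [Nat.mul_comm] at hmm

lemma level_all (h2 : 2 ≤ G.N) : Level G G.N := by
  have key : ∀ n, 2 ≤ n → n ≤ G.N → Level G n := by
    intro n
    induction n with
    | zero => intro h; omega
    | succ k ihk =>
      intro h2' hle
      rcases Nat.lt_or_ge k 2 with hk | hk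
      · have hk1 : k = 1 := by omega
        subst hk1
        exact level_two G (by omega)
      · have IH := ihk hk (by omega)
        have hkN : k < G.N := by omega
        rcases U_one_or_two (G := G) (v := ⟨k, hkN⟩) (by simp; omega) with
          ⟨τ, hUτ⟩ | ⟨a, b, hab, hUab⟩
        · exact free_step (v := ⟨k, hkN⟩) rfl hUτ IH
        · exact sat_step (v := ⟨k, hkN⟩) rfl hab hUab IH
  exact key G.N h2 le_rfl

end Base

/-! ### bridges to the original definitions -/

section Bridge

variable (G : DualGraph)

noncomputable def Qmat : Matrix (Fin G.N) (Fin G.N) ℚ := fun i j => (Qn G i j : ℚ)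

lemma P_mul_Qmat : G.P * Qmat G = 1 := by
  ext i k
  rw [Matrix.mul_apply]
  have hterm : ∀ j : Fin G.N, G.P i j * Qmat G j k
      = (if i = j then (Qn G j k : ℚ) else 0) - (if G.prox i j then (Qn G j k : ℚ) else 0) := by
    intro j
    unfold DualGraph.P Qmat
    by_cases h1 : i = j
    · subst h1
      have h2 : ¬ G.prox i i := fun hp => absurd (G.prox_lt hp) (lt_irrefl _)
      simp [h2]
    · by_cases h2 : G.prox i j <;> simp [h1, h2]
  rw [Finset.sum_congr rfl fun j _ => hterm j, Finset.sum_sub_distrib]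
  have hs1 : (∑ j : Fin G.N, if i = j then (Qn G j k : ℚ) else 0) = (Qn G i k : ℚ) := by
    rw [Finset.sum_ite_eq, if_pos (Finset.mem_univ i)]
  have hs2 : (∑ j : Fin G.N, if G.prox i j then (Qn G j k : ℚ) else 0)
      = ∑ j ∈ U G i, (Qn G j k : ℚ) := by
    rw [U]
    exact (Finset.sum_filter _ _).symm
  rw [hs1, hs2]
  have hrec := Qn_eq G i k
  have hrec' : (Qn G i k : ℚ) = (if i = k then 1 else 0) + ∑ j ∈ U G i, (Qn G j k : ℚ) := by
    rw [hrec]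
    push_cast
    by_cases h : i = k <;> simp [h]
  rw [hrec']
  rw [Matrix.one_apply]
  ring

lemma Qmat_mul_P : Qmat G * G.P = 1 := mul_eq_one_comm.1 (P_mul_Qmat G)

lemma V_eq_QQt : G.V = Qmat G * (Qmat G)ᵀ := by
  have h : (G.Pᵀ * G.P) * (Qmat G * (Qmat G)ᵀ) = 1 := by
    calc (G.Pᵀ * G.P) * (Qmat G * (Qmat G)ᵀ)
        = G.Pᵀ * ((G.P * Qmat G) * (Qmat G)ᵀ) := by
          rw [Matrix.mul_assoc, Matrix.mul_assoc]
      _ = G.Pᵀ * (Qmat G)ᵀ := by rw [P_mul_Qmat G, Matrix.one_mul]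
      _ = (Qmat G * G.P)ᵀ := by rw [Matrix.transpose_mul]
      _ = 1 := by rw [Qmat_mul_P G, Matrix.transpose_one]
  exact Matrix.inv_eq_right_inv h

lemma V_apply (μ ν : Fin G.N) : G.V μ ν = (W G μ ν : ℚ) := by
  rw [V_eq_QQt G, Matrix.mul_apply]
  unfold W
  push_cast
  refine Finset.sum_congr rfl fun k _ => ?_
  rw [Matrix.transpose_apply]
  rfl

lemma Vnat_eq (μ ν : Fin G.N) : G.Vnat μ ν = W G μ ν := by
  unfold DualGraph.Vnat
  rw [V_apply G]
  simp

lemma common_card_le (μ ν : Fin G.N) (h : μ ≠ ν) :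
    ((Finset.univ.filter (fun k => G.prox k μ ∧ G.prox k ν)).card) ≤ 1 := by
  rw [Finset.card_le_one]
  intro k1 hk1 k2 hk2
  simp only [Finset.mem_filter] at hk1 hk2
  by_contra hne
  rcases lt_trichotomy k1 k2 with hlt | heq | hlt
  · exact (G.prox_pair hk2.2.1 hk2.2.2 h).2 k1 hlt ⟨hk1.2.1, hk1.2.2⟩
  · exact hne heq
  · exact (G.prox_pair hk1.2.1 hk1.2.2 h).2 k2 hlt ⟨hk2.2.1, hk2.2.2⟩

lemma PtP_apply (μ ν : Fin G.N) (h : μ ≠ ν) :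
    (G.Pᵀ * G.P) μ ν = ((Finset.univ.filter (fun k => G.prox k μ ∧ G.prox k ν)).card : ℚ)
      - (if G.prox μ ν then 1 else 0) - (if G.prox ν μ then 1 else 0) := by
  have hP : ∀ i j : Fin G.N, G.P i j
      = (if i = j then (1:ℚ) else 0) - (if G.prox i j then 1 else 0) := by
    intro i j
    unfold DualGraph.P
    by_cases h1 : i = j
    · subst h1
      have h2 : ¬ G.prox i i := fun hp => absurd (G.prox_lt hp) (lt_irrefl _)
      simp [h2]
    · by_cases h2 : G.prox i j <;> simp [h1, h2]
  rw [Matrix.mul_apply]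
  have hterm : ∀ k : Fin G.N, G.Pᵀ μ k * G.P k ν
      = ((if k = μ then (1:ℚ) else 0) * (if k = ν then (1:ℚ) else 0)
        + (if G.prox k μ then (1:ℚ) else 0) * (if G.prox k ν then (1:ℚ) else 0))
        - ((if k = μ then (1:ℚ) else 0) * (if G.prox k ν then (1:ℚ) else 0)
        + (if G.prox k μ then (1:ℚ) else 0) * (if k = ν then (1:ℚ) else 0)) := by
    intro k
    rw [Matrix.transpose_apply, hP k μ, hP k ν]
    ring
  rw [Finset.sum_congr rfl fun k _ => hterm k, Finset.sum_sub_distrib,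
    Finset.sum_add_distrib, Finset.sum_add_distrib]
  have e1 : (∑ k : Fin G.N, (if k = μ then (1:ℚ) else 0) * (if k = ν then (1:ℚ) else 0)) = 0 := by
    rw [Finset.sum_eq_zero]
    intro k _
    by_cases h1 : k = μ
    · by_cases h2 : k = ν
      · exact absurd (h1.symm.trans h2) h
      · simp [h2]
    · simp [h1]
  have e2 : (∑ k : Fin G.N,
      (if G.prox k μ then (1:ℚ) else 0) * (if G.prox k ν then (1:ℚ) else 0))
      = ((Finset.univ.filter (fun k => G.prox k μ ∧ G.prox k ν)).card : ℚ) := by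
    have h' : ∀ k : Fin G.N,
        (if G.prox k μ then (1:ℚ) else 0) * (if G.prox k ν then (1:ℚ) else 0)
        = if G.prox k μ ∧ G.prox k ν then (1:ℚ) else 0 := by
      intro k
      by_cases h1 : G.prox k μ <;> by_cases h2 : G.prox k ν <;> simp [h1, h2]
    rw [Finset.sum_congr rfl fun k _ => h' k, Finset.sum_boole]
  have e3 : (∑ k : Fin G.N, (if k = μ then (1:ℚ) else 0) * (if G.prox k ν then (1:ℚ) else 0))
      = (if G.prox μ ν then (1:ℚ) else 0) := by
    have h' : ∀ k : Fin G.N,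
        (if k = μ then (1:ℚ) else 0) * (if G.prox k ν then (1:ℚ) else 0)
        = if k = μ then (if G.prox k ν then (1:ℚ) else 0) else 0 := by
      intro k; by_cases h1 : k = μ <;> simp [h1]
    rw [Finset.sum_congr rfl fun k _ => h' k]
    rw [Finset.sum_ite_eq', if_pos (Finset.mem_univ μ)]
  have e4 : (∑ k : Fin G.N, (if G.prox k μ then (1:ℚ) else 0) * (if k = ν then (1:ℚ) else 0))
      = (if G.prox ν μ then (1:ℚ) else 0) := by
    have h' : ∀ k : Fin G.N,
        (if G.prox k μ then (1:ℚ) else 0) * (if k = ν then (1:ℚ) else 0)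
        = if k = ν then (if G.prox k μ then (1:ℚ) else 0) else 0 := by
      intro k; by_cases h1 : k = ν <;> simp [h1]
    rw [Finset.sum_congr rfl fun k _ => h' k]
    rw [Finset.sum_ite_eq', if_pos (Finset.mem_univ ν)]
  rw [e1, e2, e3, e4]
  ring

lemma adj_iff_adjL (μ ν : Fin G.N) : G.adj μ ν ↔ adjL G G.N μ ν := by
  constructor
  · rintro ⟨hne, hval⟩
    rw [PtP_apply G μ ν hne] at hval
    have hC := common_card_le G μ ν hne
    have hCpat : 0 < (Finset.univ.filter (fun k => G.prox k μ ∧ G.prox k ν)).card →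
        (G.prox μ ν ∨ G.prox ν μ) := by
      intro hpos
      obtain ⟨k, hk⟩ := Finset.card_pos.1 hpos
      simp only [Finset.mem_filter] at hk
      exact (G.prox_pair hk.2.1 hk.2.2 hne).1
    have hanti : ¬(G.prox μ ν ∧ G.prox ν μ) := by
      rintro ⟨h1, h2⟩
      exact absurd (lt_trans (G.prox_lt h1) (G.prox_lt h2)) (lt_irrefl _)
    refine ⟨hne, μ.isLt, ν.isLt, ?_, ?_⟩
    · by_cases h1 : G.prox μ ν
      · exact Or.inl h1
      · by_cases h2 : G.prox ν μ
        · exact Or.inr h2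
        · exfalso
          rw [if_neg h1, if_neg h2] at hval
          interval_cases hcc : ((Finset.univ.filter (fun k => G.prox k μ ∧ G.prox k ν)).card)
          · norm_num at hval
          · rcases hCpat (by omega) with h | h
            exacts [h1 h, h2 h]
    · intro k hk hc
      have hpos : 0 < (Finset.univ.filter (fun k => G.prox k μ ∧ G.prox k ν)).card :=
        Finset.card_pos.2 ⟨k, Finset.mem_filter.2 ⟨Finset.mem_univ k, hc⟩⟩
      have hcc : (Finset.univ.filter (fun k => G.prox k μ ∧ G.prox k ν)).card = 1 := by omega
      rw [hcc] at hval
      by_cases h1 : G.prox μ ν <;> by_cases h2 : G.prox ν μ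
      · exact hanti ⟨h1, h2⟩
      · rw [if_pos h1, if_neg h2] at hval; norm_num at hval
      · rw [if_neg h1, if_pos h2] at hval; norm_num at hval
      · rw [if_neg h1, if_neg h2] at hval; norm_num at hval
  · rintro ⟨hne, _, _, hpat, hkill⟩
    refine ⟨hne, ?_⟩
    rw [PtP_apply G μ ν hne]
    have hC0 : (Finset.univ.filter (fun k => G.prox k μ ∧ G.prox k ν)).card = 0 := by
      rw [Finset.card_eq_zero, Finset.eq_empty_iff_forall_notMem]
      intro k hk
      simp only [Finset.mem_filter] at hk
      exact hkill k k.isLt ⟨hk.2.1, hk.2.2⟩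
    rw [hC0]
    have hanti : ¬(G.prox μ ν ∧ G.prox ν μ) := by
      rintro ⟨h1, h2⟩
      exact absurd (lt_trans (G.prox_lt h1) (G.prox_lt h2)) (lt_irrefl _)
    rcases hpat with h1 | h1
    · rw [if_pos h1, if_neg (fun h2 => hanti ⟨h1, h2⟩)]
      norm_num
    · rw [if_neg (fun h2 => hanti ⟨h2, h1⟩), if_pos h1]
      norm_num

lemma nbrs_eq (σ : Fin G.N) : G.nbrs σ = nbr G G.N σ := by
  unfold DualGraph.nbrs nbr
  apply Finset.filter_congr
  intro y _
  rw [adj_iff_adjL]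

lemma valence_iff (σ : Fin G.N) : G.valence σ ≤ 1 ↔ EndL G G.N σ := by
  unfold DualGraph.valence EndL
  rw [nbrs_eq G σ]
  simp [σ.isLt]

end Bridge

end Stmt11

/-- The value semigroup `SV_μ` is generated by the Zariski exponents of `μ`,
i.e. the values `V_{μτ}` where `τ` is an end of `Γ`. -/

theorem stmt11 (G : DualGraph) (μ : Fin G.N) :
    AddSubmonoid.closure (Set.range (G.Vnat μ)) =
      AddSubmonoid.closure {n : ℕ | ∃ τ, G.valence τ ≤ 1 ∧ G.Vnat μ τ = n} := by
  apply le_antisymm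
  · rw [AddSubmonoid.closure_le]
    rintro m ⟨ν, rfl⟩
    by_cases h2 : 2 ≤ G.N
    · have hlev := Stmt11.level_all G h2
      have h := hlev.tu μ ν μ.isLt ν.isLt
      have hsub : Stmt11.rowSet G G.N μ ⊆ {n : ℕ | ∃ τ, G.valence τ ≤ 1 ∧ G.Vnat μ τ = n} := by
        rintro m' ⟨σ, hσE, hσμ, rfl⟩
        exact ⟨σ, (Stmt11.valence_iff G σ).2 hσE, Stmt11.Vnat_eq G μ σ⟩
      have hmem := AddSubmonoid.closure_mono hsub h
      rw [Stmt11.Vnat_eq G μ ν]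
      exact hmem
    · have hN : G.N = 1 := by have := G.Npos; omega
      have hνμ : ν = μ := by
        apply Fin.ext
        have h1 := ν.isLt; have h2 := μ.isLt
        omega
      have hval : G.valence μ ≤ 1 := by
        unfold DualGraph.valence
        have hemp : G.nbrs μ = ∅ := by
          rw [Finset.eq_empty_iff_forall_notMem]
          intro y hy
          have had : G.adj μ y := by simpa [DualGraph.nbrs] using hy
          exact had.1 (Fin.ext (by have := y.isLt; have := μ.isLt; omega))
        rw [hemp]
        simp
      exact AddSubmonoid.subset_closure ⟨μ, hval, by rw [hνμ]⟩
  · rw [AddSubmonoid.closure_le]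
    rintro m ⟨τ, hτ, rfl⟩
    exact AddSubmonoid.subset_closure ⟨τ, rfl⟩
end

section
/- Let μ be a vertex of Γ. If ξ ∈ H_μ, then d_μ·ξ ∈ S^μ; in particular d_μ·ξ is a nonnegative integer. -/
open Matrix BigOperators

open scoped Classical

noncomputable section

namespace DualGraph

variable (G : DualGraph)

lemma finStrongInd {n : ℕ} {P : Fin n → Prop}
    (h : ∀ i : Fin n, (∀ j : Fin n, j < i → P j) → P i) : ∀ i, P i := fun i =>
  wellFounded_lt.induction i h

/-- Integer-combinatorial version of `Q = P⁻¹`, defined by the proximity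
recursion. -/
noncomputable def qfun : Fin G.N → Fin G.N → ℕ := fun i =>
  fun j => (if i = j then 1 else 0) +
    ∑ s ∈ (Finset.univ.filter (fun s => G.prox i s)).attach,
      qfun s.1 j
termination_by i => i.val
decreasing_by
  have hs := s.2
  rw [Finset.mem_filter] at hs
  exact G.prox_lt hs.2

lemma qfun_def (i j : Fin G.N) :
    G.qfun i j = (if i = j then 1 else 0) +
      ∑ s ∈ (Finset.univ.filter (fun s => G.prox i s)).attach, G.qfun s.1 j := by
  rw [qfun]

lemma qfun_eq_zero_of_lt : ∀ {i j : Fin G.N}, i < j → G.qfun i j = 0 := by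
  have : ∀ i : Fin G.N, ∀ j, i < j → G.qfun i j = 0 := by
    refine finStrongInd (fun i IH j hij => ?_)
    rw [qfun_def, if_neg (Fin.ne_of_lt hij), Finset.sum_eq_zero, add_zero]
    rintro ⟨s, hs⟩ -
    have hsi : G.prox i s := by simpa using hs
    exact IH s (G.prox_lt hsi) j (lt_trans (G.prox_lt hsi) hij)
  exact fun {i j} h => this i j h

lemma qfun_diag (i : Fin G.N) : G.qfun i i = 1 := by
  rw [qfun_def, if_pos rfl, Finset.sum_eq_zero, add_zero]
  rintro ⟨s, hs⟩ -
  exact G.qfun_eq_zero_of_lt (G.prox_lt (by simpa using hs))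

lemma qfun_root_pos : ∀ i : Fin G.N, 1 ≤ G.qfun i ⟨0, G.Npos⟩ := by
  refine finStrongInd (fun i IH => ?_)
  rw [qfun_def]
  rcases Nat.eq_zero_or_pos i.val with h0 | h0
  · have : i = ⟨0, G.Npos⟩ := by apply Fin.ext; simpa using h0
    simp [this]
  · obtain ⟨s, hs⟩ := G.prox_nonempty i h0
    have hmem : s ∈ Finset.univ.filter (fun s => G.prox i s) := by simpa using hs
    calc 1 ≤ G.qfun s ⟨0, G.Npos⟩ := IH s (G.prox_lt hs)
      _ ≤ ∑ t ∈ (Finset.univ.filter (fun s => G.prox i s)).attach, G.qfun t.1 ⟨0, G.Npos⟩ :=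
          Finset.single_le_sum (f := fun t => G.qfun t.1 ⟨0, G.Npos⟩)
            (fun _ _ => Nat.zero_le _) (Finset.mem_attach _ ⟨s, hmem⟩)
      _ ≤ _ := Nat.le_add_left _ _
lemma prox_irrefl (i : Fin G.N) : ¬ G.prox i i := fun h => lt_irrefl i (G.prox_lt h)

lemma qfun_def' (i j : Fin G.N) :
    G.qfun i j = (if i = j then 1 else 0) +
      ∑ s ∈ Finset.univ.filter (fun s => G.prox i s), G.qfun s j := by
  rw [qfun_def]
  congr 1
  exact Finset.sum_attach (Finset.univ.filter (fun s => G.prox i s)) (fun s => G.qfun s j)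

lemma P_apply (i t : Fin G.N) :
    G.P i t = (if i = t then (1:ℚ) else 0) - (if G.prox i t then 1 else 0) := by
  unfold P
  split_ifs with h1 h2
  · exact absurd (h1 ▸ h2) (G.prox_irrefl i)
  · norm_num
  · norm_num
  · norm_num

/-- `Q` as a rational matrix built from `qfun`. -/
def Qmat : Matrix (Fin G.N) (Fin G.N) ℚ := fun i j => (G.qfun i j : ℚ)

lemma P_mul_Qmat : G.P * G.Qmat = 1 := by
  ext i j
  rw [Matrix.mul_apply, Matrix.one_apply]
  have : ∀ t, G.P i t * G.Qmat t j
      = (if i = t then (G.Qmat t j) else 0) - (if G.prox i t then G.Qmat t j else 0) := by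
    intro t
    rw [P_apply]
    split_ifs <;> ring
  rw [Finset.sum_congr rfl (fun t _ => this t), Finset.sum_sub_distrib]
  have h1 : ∑ t, (if i = t then G.Qmat t j else 0) = G.Qmat i j := by simp
  have h2 : ∑ t, (if G.prox i t then G.Qmat t j else 0)
      = ∑ s ∈ Finset.univ.filter (fun s => G.prox i s), G.Qmat s j :=
    (Finset.sum_filter _ _).symm
  rw [h1, h2]
  have hq := G.qfun_def' i j
  have : (G.Qmat i j : ℚ) = (if i = j then (1:ℚ) else 0)
      + ∑ s ∈ Finset.univ.filter (fun s => G.prox i s), G.Qmat s j := by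
    unfold Qmat
    rw [hq]
    push_cast
    split_ifs <;> norm_num
  rw [this]
  ring

lemma Qmat_mul_P : G.Qmat * G.P = 1 := (mul_eq_one_comm).mp G.P_mul_Qmat

lemma Q_eq_Qmat : G.Q = G.Qmat := Matrix.inv_eq_right_inv G.P_mul_Qmat

/-- Natural-number valuation matrix. -/
noncomputable def vnat (i j : Fin G.N) : ℕ := ∑ s, G.qfun i s * G.qfun j s

lemma vnat_symm (i j : Fin G.N) : G.vnat i j = G.vnat j i := by
  unfold vnat
  exact Finset.sum_congr rfl (fun s _ => mul_comm _ _)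

/-- `V` as a rational matrix built from `vnat`. -/
def Vmat : Matrix (Fin G.N) (Fin G.N) ℚ := fun i j => (G.vnat i j : ℚ)

lemma Vmat_eq : G.Vmat = G.Qmat * G.Qmatᵀ := by
  ext i j
  unfold Vmat vnat
  rw [Matrix.mul_apply]; unfold Qmat
  push_cast
  rfl

lemma M_mul_Vmat : (G.Pᵀ * G.P) * G.Vmat = 1 := by
  rw [Vmat_eq]
  calc G.Pᵀ * G.P * (G.Qmat * G.Qmatᵀ) = G.Pᵀ * (G.P * G.Qmat) * G.Qmatᵀ := by
        simp only [Matrix.mul_assoc]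
    _ = G.Pᵀ * G.Qmatᵀ := by rw [P_mul_Qmat, Matrix.mul_one]
    _ = (G.Qmat * G.P)ᵀ := by rw [Matrix.transpose_mul]
    _ = 1 := by rw [Qmat_mul_P, Matrix.transpose_one]

lemma Vmat_mul_M : G.Vmat * (G.Pᵀ * G.P) = 1 := (mul_eq_one_comm).mp G.M_mul_Vmat

lemma V_eq_Vmat : G.V = G.Vmat := Matrix.inv_eq_right_inv G.M_mul_Vmat

lemma vnat_pos (i j : Fin G.N) : 1 ≤ G.vnat i j := by
  unfold vnat
  calc 1 ≤ G.qfun i ⟨0, G.Npos⟩ * G.qfun j ⟨0, G.Npos⟩ :=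
        Nat.one_le_iff_ne_zero.mpr (Nat.mul_ne_zero
          (Nat.one_le_iff_ne_zero.mp (G.qfun_root_pos i))
          (Nat.one_le_iff_ne_zero.mp (G.qfun_root_pos j)))
    _ ≤ _ := Finset.single_le_sum (f := fun s => G.qfun i s * G.qfun j s)
        (fun _ _ => Nat.zero_le _) (Finset.mem_univ _)

/-- Integer canonical values. -/
noncomputable def kInt (i : Fin G.N) : ℕ := ∑ s, G.qfun i s

lemma kvec_eq (i : Fin G.N) : G.kvec i = (G.kInt i : ℚ) := by
  unfold kvec kInt
  rw [Q_eq_Qmat]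
  push_cast
  rfl

lemma kInt_pos (i : Fin G.N) : 1 ≤ G.kInt i :=
  le_trans (by rw [G.qfun_diag i]) (Finset.single_le_sum (fun _ _ => Nat.zero_le _)
    (Finset.mem_univ i))
/-- The Finset of proximity targets of `i`. -/
noncomputable def pfin (i : Fin G.N) : Finset (Fin G.N) :=
  Finset.univ.filter (fun s => G.prox i s)

lemma mem_pfin {i s : Fin G.N} : s ∈ G.pfin i ↔ G.prox i s := by
  unfold pfin; simp

lemma pfin_card_le_two (i : Fin G.N) : (G.pfin i).card ≤ 2 := by
  have h := G.prox_card i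
  have : {ν | G.prox i ν} = (G.pfin i : Set (Fin G.N)) := by
    ext s; simp [mem_pfin]
  rw [this, Set.ncard_coe_finset] at h
  exact h

/-- Satellites common to `i` and `j`. -/
noncomputable def tfin (i j : Fin G.N) : Finset (Fin G.N) :=
  Finset.univ.filter (fun t => G.prox t i ∧ G.prox t j)

lemma mem_tfin {i j t : Fin G.N} : t ∈ G.tfin i j ↔ G.prox t i ∧ G.prox t j := by
  unfold tfin; simp

lemma tfin_card_le_one {i j : Fin G.N} (hij : i ≠ j) : (G.tfin i j).card ≤ 1 := by
  refine Finset.card_le_one.mpr (fun a ha b hb => ?_)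
  rw [mem_tfin] at ha hb
  by_contra hne
  rcases lt_or_gt_of_ne hne with h | h
  · exact ((G.prox_pair hb.1 hb.2 hij).2 a h) ha
  · exact ((G.prox_pair ha.1 ha.2 hij).2 b h) hb

lemma prox_asymm {i j : Fin G.N} (h : G.prox i j) : ¬ G.prox j i :=
  fun h' => absurd (G.prox_lt h) (asymm (G.prox_lt h'))

lemma M_apply (i j : Fin G.N) :
    (G.Pᵀ * G.P) i j = ∑ t, G.P t i * G.P t j := by
  rw [Matrix.mul_apply]
  exact Finset.sum_congr rfl (fun t _ => by rw [Matrix.transpose_apply])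

lemma M_diag (i : Fin G.N) :
    (G.Pᵀ * G.P) i i = 1 + ((Finset.univ.filter (fun t => G.prox t i)).card : ℚ) := by
  rw [M_apply]
  have : ∀ t, G.P t i * G.P t i
      = (if t = i then (1:ℚ) else 0) + (if G.prox t i then 1 else 0) := by
    intro t
    rw [P_apply]
    by_cases h1 : t = i
    · subst h1
      simp [G.prox_irrefl t]
    · rw [if_neg h1]
      split_ifs <;> norm_num
  rw [Finset.sum_congr rfl (fun t _ => this t), Finset.sum_add_distrib]
  congr 1
  · simp
  · rw [← Finset.sum_filter]
    simp

lemma M_offdiag {i j : Fin G.N} (hij : i ≠ j) :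
    (G.Pᵀ * G.P) i j = ((G.tfin i j).card : ℚ)
      - (if G.prox i j then 1 else 0) - (if G.prox j i then 1 else 0) := by
  rw [M_apply]
  have : ∀ t, G.P t i * G.P t j
      = (if (G.prox t i ∧ G.prox t j) then (1:ℚ) else 0)
        - (if t = i then (if G.prox i j then (1:ℚ) else 0) else 0)
        - (if t = j then (if G.prox j i then (1:ℚ) else 0) else 0) := by
    intro t
    rw [P_apply, P_apply]
    by_cases h1 : t = i <;> by_cases h2 : t = j
    · exact absurd (h1 ▸ h2) hij
    · subst h1
      rw [if_neg (G.prox_irrefl t)]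
      by_cases h3 : G.prox t j <;> simp [h3, hij, G.prox_irrefl]
    · subst h2
      rw [if_neg (G.prox_irrefl t)]
      by_cases h3 : G.prox t i <;> simp [h3, (Ne.symm hij), G.prox_irrefl]
    · by_cases h3 : G.prox t i <;> by_cases h4 : G.prox t j <;>
        simp [h1, h2, h3, h4]
  rw [Finset.sum_congr rfl (fun t _ => this t)]
  rw [Finset.sum_sub_distrib, Finset.sum_sub_distrib]
  congr 1
  congr 1
  · rw [← Finset.sum_filter]
    unfold tfin
    simp
  · simp
  · simp

lemma M_offdiag_cases {i j : Fin G.N} (hij : i ≠ j) :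
    (G.Pᵀ * G.P) i j = 0 ∨ (G.Pᵀ * G.P) i j = -1 := by
  rw [M_offdiag G hij]
  rcases Finset.eq_empty_or_nonempty (G.tfin i j) with he | hne
  · rw [he]
    by_cases h1 : G.prox i j
    · right
      rw [if_pos h1, if_neg (G.prox_asymm h1)]
      norm_num
    · by_cases h2 : G.prox j i
      · right; rw [if_neg h1, if_pos h2]; norm_num
      · left; rw [if_neg h1, if_neg h2]; norm_num
  · have hcard : (G.tfin i j).card = 1 :=
      le_antisymm (G.tfin_card_le_one hij) (Finset.Nonempty.card_pos hne)
    obtain ⟨t, ht⟩ := hne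
    rw [mem_tfin] at ht
    have hrel := (G.prox_pair ht.1 ht.2 hij).1
    rcases hrel with h1 | h2
    · left
      rw [hcard, if_pos h1, if_neg (G.prox_asymm h1)]
      norm_num
    · left
      rw [hcard, if_neg (G.prox_asymm h2), if_pos h2]
      norm_num

lemma M_eq_zero_of_not_adj {i j : Fin G.N} (hij : i ≠ j) (h : ¬ G.adj i j) :
    (G.Pᵀ * G.P) i j = 0 := by
  rcases G.M_offdiag_cases hij with h0 | h1
  · exact h0
  · exact absurd ⟨hij, h1⟩ h

lemma exists_sat_of_not_adj {μ j : Fin G.N} (hj : G.prox j μ) (hnadj : ¬ G.adj μ j) :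
    ∃ t, G.prox t μ ∧ G.prox t j := by
  have hne : μ ≠ j := Ne.symm (Fin.ne_of_gt (G.prox_lt hj))
  have h0 := G.M_eq_zero_of_not_adj hne hnadj
  rw [M_offdiag G hne, if_neg (G.prox_asymm hj), if_pos hj] at h0
  have : ((G.tfin μ j).card : ℚ) = 1 := by linarith
  have hcard : (G.tfin μ j).card = 1 := by exact_mod_cast this
  obtain ⟨t, ht⟩ := Finset.card_pos.mp (hcard ▸ Nat.one_pos)
  rw [mem_tfin] at ht
  exact ⟨t, ht⟩
lemma mulVec_eq_zero {y : Fin G.N → ℚ} (h : G.P *ᵥ y = 0) : y = 0 := by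
  have : G.Qmat *ᵥ (G.P *ᵥ y) = y := by
    rw [Matrix.mulVec_mulVec, Qmat_mul_P, Matrix.one_mulVec]
  rw [h, Matrix.mulVec_zero] at this
  exact this.symm

lemma quad_nonneg (y : Fin G.N → ℚ) : 0 ≤ y ⬝ᵥ ((G.Pᵀ * G.P) *ᵥ y) := by
  rw [← Matrix.mulVec_mulVec, Matrix.dotProduct_mulVec, Matrix.vecMul_transpose]
  exact Finset.sum_nonneg (fun t _ => mul_self_nonneg _)

lemma quad_eq_zero {y : Fin G.N → ℚ} (h : y ⬝ᵥ ((G.Pᵀ * G.P) *ᵥ y) = 0) : y = 0 := by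
  rw [← Matrix.mulVec_mulVec, Matrix.dotProduct_mulVec, Matrix.vecMul_transpose] at h
  exact G.mulVec_eq_zero (dotProduct_self_eq_zero.mp h)

/-- Discrete maximum principle for the M-matrix `PᵀP`. -/
lemma maxprin {x : Fin G.N → ℚ} {μ : Fin G.N} (hxμ : x μ = 0)
    (h : ∀ t, t ≠ μ → 0 ≤ ((G.Pᵀ * G.P) *ᵥ x) t) : ∀ t, 0 ≤ x t := by
  set M := G.Pᵀ * G.P with hM
  set y : Fin G.N → ℚ := fun t => max (-(x t)) 0 with hy
  set p : Fin G.N → ℚ := fun t => max (x t) 0 with hp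
  have hypnn : ∀ t, 0 ≤ y t ∧ 0 ≤ p t := fun t => ⟨le_max_right _ _, le_max_right _ _⟩
  have hyp0 : ∀ t, y t * p t = 0 := by
    intro t
    rcases le_or_gt (x t) 0 with h1 | h1
    · have : p t = 0 := max_eq_right h1
      rw [this, mul_zero]
    · have : y t = 0 := max_eq_right (by linarith)
      rw [this, zero_mul]
  have hxpy : ∀ t, x t = p t - y t := by
    intro t
    rcases le_or_gt (x t) 0 with h1 | h1
    · rw [hy, hp]; simp only []
      rw [max_eq_right h1, max_eq_left (by linarith)]
      ring
    · rw [hy, hp]; simp only []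
      rw [max_eq_left (by linarith), max_eq_right (by linarith)]
      ring
  have hyμ : y μ = 0 := by rw [hy]; simp only []; rw [hxμ]; simp
  have claim1 : 0 ≤ y ⬝ᵥ (M *ᵥ x) := by
    rw [dotProduct]
    refine Finset.sum_nonneg (fun t _ => ?_)
    by_cases ht : t = μ
    · rw [ht, hyμ, zero_mul]
    · exact mul_nonneg (hypnn t).1 (h t ht)
  have claim2 : y ⬝ᵥ (M *ᵥ p) ≤ 0 := by
    rw [dotProduct]
    refine Finset.sum_nonpos (fun t _ => ?_)
    rw [Matrix.mulVec, dotProduct, Finset.mul_sum]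
    refine Finset.sum_nonpos (fun s _ => ?_)
    by_cases hts : t = s
    · rw [hts]
      rw [show y s * (M s s * p s) = (M s s) * (y s * p s) by ring, hyp0 s, mul_zero]
    · have hMts : M t s ≤ 0 := by
        rcases G.M_offdiag_cases hts with h0 | h1
        · rw [hM] at *; rw [h0]
        · rw [hM] at *; rw [h1]; norm_num
      have : y t * (M t s * p s) = (M t s) * (y t * p s) := by ring
      rw [this]
      exact mul_nonpos_of_nonpos_of_nonneg hMts (mul_nonneg (hypnn t).1 (hypnn s).2)
  have hMy : M *ᵥ y = (M *ᵥ p) - (M *ᵥ x) := by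
    have : y = p - x := by
      funext t
      have := hxpy t
      simp only [Pi.sub_apply]
      linarith
    rw [this, Matrix.mulVec_sub]
  have hyMy : y ⬝ᵥ (M *ᵥ y) ≤ 0 := by
    rw [hMy, dotProduct_sub]
    linarith
  have hy0 : y = 0 := G.quad_eq_zero (le_antisymm hyMy (G.quad_nonneg y))
  intro t
  have : y t = 0 := by rw [hy0]; rfl
  have hxt := hxpy t
  rw [this] at hxt
  have : 0 ≤ p t := (hypnn t).2
  linarith

/-- The key inequality: `V_{μν}·V_{tμ} ≤ V_{μμ}·V_{tν}` for all `t, ν`. -/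
lemma vnat_cross (μ ν t : Fin G.N) :
    G.vnat μ ν * G.vnat t μ ≤ G.vnat μ μ * G.vnat t ν := by
  set x : Fin G.N → ℚ := fun t => (G.vnat μ μ : ℚ) * G.Vmat t ν - (G.vnat μ ν : ℚ) * G.Vmat t μ
    with hx
  have hcol : ∀ (s j : Fin G.N), ((G.Pᵀ * G.P) *ᵥ (fun t => G.Vmat t j)) s
      = (1 : Matrix (Fin G.N) (Fin G.N) ℚ) s j := by
    intro s j
    rw [← G.M_mul_Vmat, Matrix.mul_apply]
    rfl
  have hMx : ∀ s, ((G.Pᵀ * G.P) *ᵥ x) s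
      = (G.vnat μ μ : ℚ) * (1 : Matrix (Fin G.N) (Fin G.N) ℚ) s ν
        - (G.vnat μ ν : ℚ) * (1 : Matrix (Fin G.N) (Fin G.N) ℚ) s μ := by
    intro s
    rw [← hcol s ν, ← hcol s μ]
    rw [Matrix.mulVec, Matrix.mulVec, Matrix.mulVec, dotProduct, dotProduct, dotProduct]
    rw [Finset.mul_sum, Finset.mul_sum, ← Finset.sum_sub_distrib]
    refine Finset.sum_congr rfl (fun u _ => ?_)
    rw [hx]
    ring
  have hxμ : x μ = 0 := by
    rw [hx]
    simp only []
    unfold Vmat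
    rw [G.vnat_symm μ ν]
    ring
  have hpos := G.maxprin hxμ (fun s hs => by
    rw [hMx s, Matrix.one_apply, Matrix.one_apply, if_neg hs]
    by_cases hsν : s = ν
    · rw [if_pos hsν]
      have : (0:ℚ) ≤ (G.vnat μ μ : ℚ) := by positivity
      linarith
    · rw [if_neg hsν]; norm_num)
  have := hpos t
  rw [hx] at this
  unfold Vmat at this
  simp only [] at this
  have h2 : (G.vnat μ ν : ℚ) * (G.vnat t μ : ℚ) ≤ (G.vnat μ μ : ℚ) * (G.vnat t ν : ℚ) := by
    linarith
  exact_mod_cast h2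
/-- Free points proximate to `μ`. -/
noncomputable def FP (μ : Fin G.N) : Finset (Fin G.N) :=
  Finset.univ.filter (fun j => G.prox j μ ∧ (G.pfin j).card = 1)

lemma mem_FP {μ j : Fin G.N} : j ∈ G.FP μ ↔ G.prox j μ ∧ (G.pfin j).card = 1 := by
  unfold FP; simp

lemma pfin_eq_singleton {μ j : Fin G.N} (hj : j ∈ G.FP μ) : G.pfin j = {μ} := by
  rw [mem_FP] at hj
  obtain ⟨a, ha⟩ := Finset.card_eq_one.mp hj.2
  have hμ : μ ∈ G.pfin j := G.mem_pfin.mpr hj.1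
  rw [ha] at hμ ⊢
  rw [Finset.mem_singleton] at hμ
  rw [hμ]

lemma pfin_eq_pair {μ t w : Fin G.N} (h1 : G.prox w μ) (h2 : G.prox w t) (hμt : μ ≠ t) :
    G.pfin w = {μ, t} := by
  refine (Finset.eq_of_subset_of_card_le ?_ ?_).symm
  · intro p hp
    rw [Finset.mem_insert, Finset.mem_singleton] at hp
    rcases hp with h | h
    · exact h ▸ G.mem_pfin.mpr h1
    · exact h ▸ G.mem_pfin.mpr h2
  · calc (G.pfin w).card ≤ 2 := G.pfin_card_le_two w
      _ = ({μ, t} : Finset (Fin G.N)).card := by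
          rw [Finset.card_insert_of_notMem (by simpa using hμt), Finset.card_singleton]

/-- Walk to the end of the satellite chain towards `μ`. -/
noncomputable def gg (μ : Fin G.N) : Fin G.N → Fin G.N := fun t =>
  if h : ∃ p, G.prox t p ∧ p ≠ μ ∧ G.prox p μ then gg μ h.choose else t
termination_by t => t.val
decreasing_by
  exact G.prox_lt h.choose_spec.1

lemma gg_def (μ t : Fin G.N) :
    G.gg μ t = if h : ∃ p, G.prox t p ∧ p ≠ μ ∧ G.prox p μ then G.gg μ h.choose else t := by
  rw [gg]

lemma gg_eq_self_of_free {μ j : Fin G.N} (hj : j ∈ G.FP μ) : G.gg μ j = j := by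
  rw [gg_def, dif_neg]
  rintro ⟨p, hp1, hp2, -⟩
  have : p ∈ G.pfin j := G.mem_pfin.mpr hp1
  rw [G.pfin_eq_singleton hj, Finset.mem_singleton] at this
  exact hp2 this

lemma qfun_row_free {μ j : Fin G.N} (h : G.pfin j = {μ}) (s : Fin G.N) :
    G.qfun j s = (if j = s then 1 else 0) + G.qfun μ s := by
  rw [qfun_def' G j s]
  have : Finset.univ.filter (fun s => G.prox j s) = G.pfin j := rfl
  rw [this, h, Finset.sum_singleton]

lemma qfun_row_sat {μ t w : Fin G.N} (h : G.pfin w = {μ, t}) (hμt : μ ≠ t) (s : Fin G.N) :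
    G.qfun w s = (if w = s then 1 else 0) + (G.qfun μ s + G.qfun t s) := by
  rw [qfun_def' G w s]
  have h2 : Finset.univ.filter (fun s => G.prox w s) = G.pfin w := rfl
  rw [h2, h, Finset.sum_pair hμt]

lemma vnat_row_free {μ j : Fin G.N} (h : G.pfin j = {μ}) (s : Fin G.N) :
    G.vnat s j = G.vnat s μ + G.qfun s j := by
  unfold vnat
  calc ∑ u, G.qfun s u * G.qfun j u
      = ∑ u, (G.qfun s u * G.qfun μ u + (if j = u then G.qfun s u else 0)) := by
        refine Finset.sum_congr rfl (fun u _ => ?_)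
        rw [G.qfun_row_free h u]
        split_ifs <;> ring
    _ = G.vnat s μ + G.qfun s j := by
        rw [Finset.sum_add_distrib]
        congr 1
        simp

lemma vnat_row_sat {μ t w : Fin G.N} (h : G.pfin w = {μ, t}) (hμt : μ ≠ t) (s : Fin G.N) :
    G.vnat s w = G.vnat s μ + G.vnat s t + G.qfun s w := by
  unfold vnat
  calc ∑ u, G.qfun s u * G.qfun w u
      = ∑ u, (G.qfun s u * G.qfun μ u + G.qfun s u * G.qfun t u
          + (if w = u then G.qfun s u else 0)) := by
        refine Finset.sum_congr rfl (fun u _ => ?_)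
        rw [G.qfun_row_sat h hμt u]
        split_ifs <;> ring
    _ = G.vnat s μ + G.vnat s t + G.qfun s w := by
        rw [Finset.sum_add_distrib, Finset.sum_add_distrib]
        congr 1
        simp

lemma kInt_row_free {μ j : Fin G.N} (h : G.pfin j = {μ}) :
    G.kInt j = 1 + G.kInt μ := by
  unfold kInt
  calc ∑ s, G.qfun j s = ∑ s, ((if j = s then 1 else 0) + G.qfun μ s) :=
        Finset.sum_congr rfl (fun s _ => G.qfun_row_free h s)
    _ = 1 + G.kInt μ := by
        rw [Finset.sum_add_distrib]
        congr 1
        simp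

lemma kInt_row_sat {μ t w : Fin G.N} (h : G.pfin w = {μ, t}) (hμt : μ ≠ t) :
    G.kInt w = 1 + (G.kInt μ + G.kInt t) := by
  unfold kInt
  calc ∑ s, G.qfun w s = ∑ s, ((if w = s then 1 else 0) + (G.qfun μ s + G.qfun t s)) :=
        Finset.sum_congr rfl (fun s _ => G.qfun_row_sat h hμt s)
    _ = 1 + (G.kInt μ + G.kInt t) := by
        rw [Finset.sum_add_distrib, Finset.sum_add_distrib]
        congr 1
        simp

/-- The chain invariant. -/
def Inv (μ t : Fin G.N) (a : ℕ) : Prop :=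
  G.vnat μ t = a * G.vnat μ μ ∧ (∀ s, a * G.vnat s μ ≤ G.vnat s t)
    ∧ a * (G.kInt μ + 1) + 1 ≤ G.kInt t + 1

lemma inv_base {μ j : Fin G.N} (hj : j ∈ G.FP μ) : G.Inv μ j 1 := by
  have h := G.pfin_eq_singleton hj
  have hμj : μ < j := G.prox_lt (G.mem_FP.mp hj).1
  refine ⟨?_, ?_, ?_⟩
  · rw [G.vnat_row_free h μ, G.qfun_eq_zero_of_lt hμj, one_mul, add_zero]
  · intro s
    rw [G.vnat_row_free h s, one_mul]
    exact Nat.le_add_right _ _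
  · rw [G.kInt_row_free h]
    omega

lemma inv_step {μ t w : Fin G.N} (hwμ : G.prox w μ) (hwt : G.prox w t) (htμ : G.prox t μ)
    {a : ℕ} (hinv : G.Inv μ t a) : G.Inv μ w (a + 1) := by
  have hμt : μ ≠ t := Fin.ne_of_lt (G.prox_lt htμ)
  have h := G.pfin_eq_pair hwμ hwt hμt
  have hμw : μ < w := G.prox_lt hwμ
  obtain ⟨h1, h2, h3⟩ := hinv
  refine ⟨?_, ?_, ?_⟩
  · rw [G.vnat_row_sat h hμt μ, G.qfun_eq_zero_of_lt hμw, h1]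
    ring
  · intro s
    have := h2 s
    rw [G.vnat_row_sat h hμt s]
    have : (a+1) * G.vnat s μ = G.vnat s μ + a * G.vnat s μ := by ring
    rw [this]
    have := h2 s
    omega
  · rw [G.kInt_row_sat h hμt]
    have : (a+1) * (G.kInt μ + 1) + 1 = (a * (G.kInt μ + 1) + 1) + (G.kInt μ + 1) := by ring
    omega

/-- Every chain from a point proximate to `μ` ends at a neighbour of `μ`,
preserving the invariant. -/
lemma chain_lemma (μ : Fin G.N) : ∀ n : ℕ, ∀ t : Fin G.N, G.N - t.val = n →
    G.prox t μ → ∀ a : ℕ, 1 ≤ a → G.Inv μ t a →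
    ∃ ν, G.adj μ ν ∧ G.gg μ ν = G.gg μ t ∧ ∃ a' : ℕ, 1 ≤ a' ∧ G.Inv μ ν a' := by
  intro n
  induction n using Nat.strong_induction_on with
  | _ n IH =>
    intro t hn htμ a ha hinv
    by_cases hadj : G.adj μ t
    · exact ⟨t, hadj, rfl, a, ha, hinv⟩
    · obtain ⟨w, hwμ, hwt⟩ := G.exists_sat_of_not_adj htμ hadj
      have htw : t < w := G.prox_lt hwt
      have hinv' := G.inv_step hwμ hwt htμ hinv
      have hggw : G.gg μ w = G.gg μ t := by
        rw [gg_def]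
        have hex : ∃ p, G.prox w p ∧ p ≠ μ ∧ G.prox p μ :=
          ⟨t, hwt, Ne.symm (Fin.ne_of_lt (G.prox_lt htμ)), htμ⟩
        rw [dif_pos hex]
        have hp := hex.choose_spec
        have : hex.choose ∈ G.pfin w := G.mem_pfin.mpr hp.1
        rw [G.pfin_eq_pair hwμ hwt (Fin.ne_of_lt (G.prox_lt htμ)), Finset.mem_insert,
          Finset.mem_singleton] at this
        rcases this with h | h
        · exact absurd h hp.2.1
        · rw [h]
      have hlt : G.N - w.val < n := by
        have := w.isLt
        omega
      obtain ⟨ν, hν1, hν2, hν3⟩ := IH _ hlt w rfl hwμ (a+1) (by omega) hinv'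
      exact ⟨ν, hν1, by rw [hν2, hggw], hν3⟩
lemma Vnat_eq_vnat (μ ν : Fin G.N) : G.Vnat μ ν = G.vnat μ ν := by
  unfold Vnat
  rw [V_eq_Vmat]
  unfold Vmat
  rw [Rat.num_natCast]
  exact Int.toNat_natCast _

lemma mem_nbrs {μ ν : Fin G.N} : ν ∈ G.nbrs μ ↔ G.adj μ ν := by
  unfold nbrs; simp

lemma mem_branch_self {μ ν : Fin G.N} (h : G.adj μ ν) : ν ∈ G.branch μ ν := by
  unfold branch
  rw [Finset.mem_filter]
  refine ⟨Finset.mem_univ _, Ne.symm h.1, Ne.symm h.1, ?_⟩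
  unfold pathSet
  rw [Finset.mem_filter]
  rintro ⟨-, habs⟩
  unfold dist at habs
  rw [SimpleGraph.dist_self] at habs
  have hreach : G.graph.Reachable ν μ := SimpleGraph.Adj.reachable (G.adj_symm h)
  have hpos : 0 < G.graph.dist ν μ := hreach.pos_dist_of_ne (Ne.symm h.1)
  omega

lemma sgcd_dvd_diag (μ ν : Fin G.N) : G.sgcd μ ν ∣ G.vnat μ μ := by
  have := Finset.gcd_dvd (f := G.Vnat μ) (Finset.mem_insert_self μ (G.branch μ ν))
  rwa [Vnat_eq_vnat] at this

lemma sgcd_dvd_nbr {μ ν : Fin G.N} (h : G.adj μ ν) : G.sgcd μ ν ∣ G.vnat μ ν := by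
  have := Finset.gcd_dvd (f := G.Vnat μ)
    (Finset.mem_insert_of_mem (s := G.branch μ ν) (b := μ) (G.mem_branch_self h))
  rwa [Vnat_eq_vnat] at this

lemma sgcd_self (μ : Fin G.N) : G.sgcd μ μ = G.vnat μ μ := by
  unfold sgcd
  have hb : G.branch μ μ = ∅ := by
    unfold branch
    apply Finset.filter_false_of_mem
    rintro η - ⟨habs, -⟩
    exact habs rfl
  rw [hb, LawfulSingleton.insert_empty_eq, Finset.gcd_singleton, Vnat_eq_vnat]
  exact normalize_eq _

lemma mem_Ssg_of_dvd {μ ν : Fin G.N} {n : ℕ} (h : G.sgcd μ ν ∣ n) : n ∈ G.Ssg μ := by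
  obtain ⟨t, rfl⟩ := h
  have hgen : G.sgcd μ ν ∈ G.Ssg μ :=
    AddSubmonoid.subset_closure ⟨ν, rfl⟩
  have := AddSubmonoid.nsmul_mem (G.Ssg μ) hgen t
  rwa [smul_eq_mul, mul_comm] at this

/-- Number of vertices proximate to `i`. -/
noncomputable def scount (i : Fin G.N) : ℕ :=
  (Finset.univ.filter (fun t => G.prox t i)).card

/-- Row-sum splitting for the intersection matrix. -/
lemma Msum (μ : Fin G.N) (g : Fin G.N → ℚ) :
    ∑ t, g t * (G.Pᵀ * G.P) t μ
      = ((1 + G.scount μ : ℕ) : ℚ) * g μ - ∑ ν ∈ G.nbrs μ, g ν := by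
  have hsymm : ∀ t, (G.Pᵀ * G.P) t μ = (G.Pᵀ * G.P) μ t := by
    intro t
    have : (G.Pᵀ * G.P)ᵀ = G.Pᵀ * G.P := by
      rw [Matrix.transpose_mul, Matrix.transpose_transpose]
    calc (G.Pᵀ * G.P) t μ = (G.Pᵀ * G.P)ᵀ μ t := rfl
      _ = (G.Pᵀ * G.P) μ t := by rw [this]
  have key : ∀ t, g t * (G.Pᵀ * G.P) t μ
      = (if t = μ then ((1 + G.scount μ : ℕ) : ℚ) * g μ else 0)
        - (if G.adj μ t then g t else 0) := by
    intro t
    rw [hsymm t]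
    by_cases ht : t = μ
    · subst ht
      rw [if_pos rfl, if_neg (fun h => h.1 rfl), M_diag]
      unfold scount
      push_cast
      ring
    · rw [if_neg ht]
      by_cases hadj : G.adj μ t
      · rw [if_pos hadj, hadj.2]
        ring
      · rw [if_neg hadj, G.M_eq_zero_of_not_adj (Ne.symm ht) hadj]
        ring
  rw [Finset.sum_congr rfl (fun t _ => key t), Finset.sum_sub_distrib]
  congr 1
  · simp
  · rw [← Finset.sum_filter]
    rfl

/-- `Σ_{ν∼μ} V_{μν} = w_μ·V_{μμ} − 1` (rational form). -/
lemma vsum_nbrs (μ : Fin G.N) :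
    ∑ ν ∈ G.nbrs μ, (G.vnat μ ν : ℚ)
      = ((1 + G.scount μ : ℕ) : ℚ) * (G.vnat μ μ : ℚ) - 1 := by
  have h1 : (G.Vmat * (G.Pᵀ * G.P)) μ μ = 1 := by
    rw [Vmat_mul_M, Matrix.one_apply_eq]
  rw [Matrix.mul_apply] at h1
  have h2 := G.Msum μ (fun t => G.Vmat μ t)
  rw [h1] at h2
  unfold Vmat at h2
  have h3 : ∀ ν ∈ G.nbrs μ, (G.vnat μ ν : ℚ) = ((fun t => (G.vnat μ t : ℚ)) ν) := fun _ _ => rfl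
  rw [Finset.sum_congr rfl h3]
  linarith

lemma kInt_rec (j : Fin G.N) : G.kInt j = 1 + ∑ t ∈ G.pfin j, G.kInt t := by
  unfold kInt
  calc ∑ s, G.qfun j s
      = ∑ s, ((if j = s then 1 else 0) + ∑ t ∈ G.pfin j, G.qfun t s) :=
        Finset.sum_congr rfl (fun s _ => G.qfun_def' j s)
    _ = 1 + ∑ s, ∑ t ∈ G.pfin j, G.qfun t s := by
        rw [Finset.sum_add_distrib]
        congr 1
        simp
    _ = 1 + ∑ t ∈ G.pfin j, ∑ s, G.qfun t s := by rw [Finset.sum_comm]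

/-- `P *ᵥ (k+1) = c` where `c_j = 2 − #prox(j)`. -/
lemma P_mulVec_k (j : Fin G.N) :
    (G.P *ᵥ (fun t => (G.kInt t : ℚ) + 1)) j = 2 - ((G.pfin j).card : ℚ) := by
  rw [Matrix.mulVec, dotProduct]
  have key : ∀ t, G.P j t * ((G.kInt t : ℚ) + 1)
      = (if j = t then ((G.kInt t : ℚ) + 1) else 0)
        - (if G.prox j t then ((G.kInt t : ℚ) + 1) else 0) := by
    intro t
    rw [P_apply]
    split_ifs <;> ring
  rw [Finset.sum_congr rfl (fun t _ => key t), Finset.sum_sub_distrib]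
  have h1 : ∑ t, (if j = t then ((G.kInt t : ℚ) + 1) else 0) = (G.kInt j : ℚ) + 1 := by simp
  have h2 : ∑ t, (if G.prox j t then ((G.kInt t : ℚ) + 1) else 0)
      = ∑ t ∈ G.pfin j, ((G.kInt t : ℚ) + 1) := by
    rw [← Finset.sum_filter]
    rfl
  rw [h1, h2, Finset.sum_add_distrib]
  have h3 := G.kInt_rec j
  have h4 : (G.kInt j : ℚ) = 1 + ∑ t ∈ G.pfin j, (G.kInt t : ℚ) := by
    rw [h3]
    push_cast
    rfl
  rw [h4]
  simp
  ring

end DualGraph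
end
/-- If `ξ ∈ H_μ` then `d_μ·ξ ∈ S^μ`; in particular `d_μ·ξ` is a nonnegative
integer. -/
theorem stmt16 (G : DualGraph) (μ : Fin G.N) (dh : Fin G.N → ℕ) (hdh : dh ≠ 0) :
    ∀ ξ ∈ G.Hset dh μ, ∃ n ∈ G.Ssg μ, (n : ℚ) = G.dval dh μ * ξ := by
  intro ξ hξ
  obtain ⟨f, hanti, hmin, hxi⟩ := hξ
  set m : ℕ := G.vnat μ μ with hm
  have hdval : ∀ ν, G.dval dh ν = ∑ i, (dh i : ℚ) * (G.vnat i ν : ℚ) := by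
    intro ν
    unfold DualGraph.dval
    rw [G.V_eq_Vmat]
    rfl
  obtain ⟨i0, hi0⟩ : ∃ i, dh i ≠ 0 := by
    by_contra hall
    push_neg at hall
    exact hdh (funext hall)
  have hdpos : ∀ ν, 0 < G.dval dh ν := by
    intro ν
    rw [hdval]
    have hterm : (0:ℚ) < (dh i0 : ℚ) * (G.vnat i0 ν : ℚ) := by
      have h1 : (0:ℚ) < (dh i0 : ℚ) := by exact_mod_cast Nat.pos_of_ne_zero hi0
      have h2 : (0:ℚ) < (G.vnat i0 ν : ℚ) := by exact_mod_cast G.vnat_pos i0 ν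
      exact mul_pos h1 h2
    refine lt_of_lt_of_le hterm (Finset.single_le_sum (f := fun i => (dh i : ℚ) * (G.vnat i ν : ℚ))
      (fun i _ => by positivity) (Finset.mem_univ i0))
  set eI : Fin G.N → ℤ := fun t => f t + (G.kInt t : ℤ) + 1 with heI
  have heQ : ∀ t, ((eI t : ℤ) : ℚ) = (f t : ℚ) + (G.kInt t : ℚ) + 1 := by
    intro t
    rw [heI]
    push_cast
    ring
  have hlam : ∀ ν, G.lamA dh ((f ν : ℤ) : ℚ) ν = ((eI ν : ℤ) : ℚ) / G.dval dh ν := by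
    intro ν
    unfold DualGraph.lamA
    rw [heQ, G.kvec_eq]
  have hmin' : ∀ ν, ((eI μ : ℤ) : ℚ) * G.dval dh ν ≤ ((eI ν : ℤ) : ℚ) * G.dval dh μ := by
    intro ν
    have h := hmin ν
    rw [hlam, hlam] at h
    exact (div_le_div_iff₀ (hdpos μ) (hdpos ν)).mp h
  set fhat : Fin G.N → ℚ := (fun t => (f t : ℚ)) ᵥ* (G.Pᵀ * G.P) with hfhat
  have hfh : ∀ i, 0 ≤ fhat i := hanti
  have hf_eq : ∀ t, (f t : ℚ) = ∑ i, fhat i * (G.vnat i t : ℚ) := by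
    intro t
    have h1 : fhat ᵥ* G.Vmat = (fun t => (f t : ℚ)) := by
      rw [hfhat, Matrix.vecMul_vecMul, G.M_mul_Vmat, Matrix.vecMul_one]
    calc (f t : ℚ) = (fhat ᵥ* G.Vmat) t := by rw [h1]
      _ = ∑ i, fhat i * (G.vnat i t : ℚ) := by
          rw [Matrix.vecMul, dotProduct]
          rfl
  have hfnn : ∀ t, (0:ℚ) ≤ (f t : ℚ) := by
    intro t
    rw [hf_eq]
    exact Finset.sum_nonneg (fun i _ => mul_nonneg (hfh i) (by positivity))
  have heμpos : 0 < eI μ := by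
    have h1 : (0:ℤ) ≤ f μ := by exact_mod_cast hfnn μ
    have h2 : (0:ℤ) ≤ (G.kInt μ : ℤ) := by positivity
    simp only [heI]
    omega
  have hdcross : ∀ ν, (G.vnat μ ν : ℚ) * G.dval dh μ ≤ (m:ℚ) * G.dval dh ν := by
    intro ν
    rw [hdval, hdval, Finset.mul_sum, Finset.mul_sum]
    refine Finset.sum_le_sum (fun i _ => ?_)
    have hcq : (G.vnat μ ν : ℚ) * (G.vnat i μ : ℚ) ≤ (m:ℚ) * (G.vnat i ν : ℚ) := by
      exact_mod_cast G.vnat_cross μ ν i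
    have hdnn : (0:ℚ) ≤ (dh i : ℚ) := by positivity
    calc (G.vnat μ ν : ℚ) * ((dh i : ℚ) * (G.vnat i μ : ℚ))
        = (dh i : ℚ) * ((G.vnat μ ν : ℚ) * (G.vnat i μ : ℚ)) := by ring
      _ ≤ (dh i : ℚ) * ((m:ℚ) * (G.vnat i ν : ℚ)) := mul_le_mul_of_nonneg_left hcq hdnn
      _ = (m:ℚ) * ((dh i : ℚ) * (G.vnat i ν : ℚ)) := by ring
  set SI : Fin G.N → ℤ := fun ν => (m:ℤ) * eI ν - (G.vnat μ ν : ℤ) * eI μ with hSI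
  have hSnn : ∀ ν, 0 ≤ SI ν := by
    intro ν
    have heμnn : (0:ℚ) ≤ ((eI μ : ℤ) : ℚ) := by exact_mod_cast le_of_lt heμpos
    have hmnn : (0:ℚ) ≤ (m:ℚ) := by positivity
    have h1 := mul_le_mul_of_nonneg_left (hdcross ν) heμnn
    have h2 := mul_le_mul_of_nonneg_left (hmin' ν) hmnn
    have key : ((G.vnat μ ν : ℚ) * ((eI μ : ℤ) : ℚ)) * G.dval dh μ
        ≤ ((m:ℚ) * ((eI ν : ℤ) : ℚ)) * G.dval dh μ := by nlinarith
    have key2 := le_of_mul_le_mul_right key (hdpos μ)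
    have hZ : (G.vnat μ ν : ℤ) * eI μ ≤ (m:ℤ) * eI ν := by exact_mod_cast key2
    simp only [hSI]
    omega
  -- neighbour sum of V-values
  have hvsumZ : ∑ ν ∈ G.nbrs μ, (G.vnat μ ν : ℤ) = ((1 + G.scount μ : ℕ) : ℤ) * (m:ℤ) - 1 := by
    have h := G.vsum_nbrs μ
    have h2 : ((∑ ν ∈ G.nbrs μ, (G.vnat μ ν : ℤ) : ℤ) : ℚ)
        = ((((1 + G.scount μ : ℕ) : ℤ) * (m:ℤ) - 1 : ℤ) : ℚ) := by
      push_cast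
      push_cast at h
      linarith
    exact_mod_cast h2
  set W : ℕ := 1 + G.scount μ with hW
  set Ehat : ℤ := (W:ℤ) * eI μ - ∑ ν ∈ G.nbrs μ, eI ν with hEhat
  have htel : eI μ = (m:ℤ) * Ehat + ∑ ν ∈ G.nbrs μ, SI ν := by
    have hsplit : ∑ ν ∈ G.nbrs μ, SI ν
        = (m:ℤ) * (∑ ν ∈ G.nbrs μ, eI ν) - ((W:ℤ) * (m:ℤ) - 1) * eI μ := by
      rw [hSI]
      rw [Finset.sum_sub_distrib, ← Finset.mul_sum, ← Finset.sum_mul, hvsumZ, hW]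
    rw [hsplit, hEhat]
    ring
  -- rational identity for Ehat
  have hMapply : ∀ g : Fin G.N → ℚ, (g ᵥ* (G.Pᵀ * G.P)) μ = ∑ t, g t * (G.Pᵀ * G.P) t μ := by
    intro g
    rw [Matrix.vecMul, dotProduct]
  have hEhatQ : ((Ehat : ℤ) : ℚ) = ((fun t => ((eI t : ℤ) : ℚ)) ᵥ* (G.Pᵀ * G.P)) μ := by
    rw [hMapply, G.Msum μ (fun t => ((eI t : ℤ) : ℚ)), hEhat, hW]
    push_cast
    ring
  have heQsplit : (fun t => ((eI t : ℤ) : ℚ))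
      = (fun t => (f t : ℚ)) + (fun t => (G.kInt t : ℚ) + 1) := by
    funext t
    rw [Pi.add_apply, heQ]
    ring
  have hkM : ((fun t => (G.kInt t : ℚ) + 1) ᵥ* (G.Pᵀ * G.P)) μ
      = (2 - ((G.pfin μ).card : ℚ))
        - ∑ j ∈ Finset.univ.filter (fun j => G.prox j μ), (2 - ((G.pfin j).card : ℚ)) := by
    have h1 : (fun t => (G.kInt t : ℚ) + 1) ᵥ* (G.Pᵀ * G.P)
        = (G.P *ᵥ (fun t => (G.kInt t : ℚ) + 1)) ᵥ* G.P := by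
      rw [← Matrix.vecMul_vecMul, Matrix.vecMul_transpose]
    have h2 : (G.P *ᵥ (fun t => (G.kInt t : ℚ) + 1)) = fun j => 2 - ((G.pfin j).card : ℚ) :=
      funext (fun j => G.P_mulVec_k j)
    rw [h1, h2, Matrix.vecMul, dotProduct]
    have key : ∀ j, (2 - ((G.pfin j).card : ℚ)) * G.P j μ
        = (if j = μ then (2 - ((G.pfin j).card : ℚ)) else 0)
          - (if G.prox j μ then (2 - ((G.pfin j).card : ℚ)) else 0) := by
      intro j
      rw [G.P_apply]
      split_ifs <;> ring
    rw [Finset.sum_congr rfl (fun j _ => key j), Finset.sum_sub_distrib]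
    congr 1
    · simp
    · rw [← Finset.sum_filter]
  have hcsum : ∑ j ∈ Finset.univ.filter (fun j => G.prox j μ), (2 - ((G.pfin j).card : ℚ))
      ≤ ((G.FP μ).card : ℚ) := by
    have hterm : ∀ j ∈ Finset.univ.filter (fun j => G.prox j μ),
        (2 - ((G.pfin j).card : ℚ)) = (if (G.pfin j).card = 1 then (1:ℚ) else 0) := by
      intro j hj
      rw [Finset.mem_filter] at hj
      have h1 : 1 ≤ (G.pfin j).card := Finset.card_pos.mpr ⟨μ, G.mem_pfin.mpr hj.2⟩
      have h2 := G.pfin_card_le_two j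
      rcases (by omega : (G.pfin j).card = 1 ∨ (G.pfin j).card = 2) with h | h
      · rw [h, if_pos rfl]
        norm_num
      · rw [h, if_neg (by omega)]
        norm_num
    rw [Finset.sum_congr rfl hterm]
    have hbool : ∑ j ∈ Finset.univ.filter (fun j => G.prox j μ),
        (if (G.pfin j).card = 1 then (1:ℚ) else 0)
        = (((Finset.univ.filter (fun j => G.prox j μ)).filter
            (fun j => (G.pfin j).card = 1)).card : ℚ) := by
      rw [Finset.sum_boole]
    rw [hbool]
    have : (Finset.univ.filter (fun j => G.prox j μ)).filter (fun j => (G.pfin j).card = 1)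
        = G.FP μ := by
      rw [Finset.filter_filter]
      rfl
    rw [this]
  have hcμnn : (0:ℚ) ≤ 2 - ((G.pfin μ).card : ℚ) := by
    have h := G.pfin_card_le_two μ
    have h2 : ((G.pfin μ).card : ℚ) ≤ 2 := by exact_mod_cast h
    linarith
  have hEb : -(((G.FP μ).card : ℤ)) ≤ Ehat := by
    have hq : -(((G.FP μ).card : ℚ)) ≤ ((Ehat : ℤ) : ℚ) := by
      rw [hEhatQ, heQsplit, Matrix.add_vecMul, Pi.add_apply, hkM]
      have hfμ : 0 ≤ ((fun t => (f t : ℚ)) ᵥ* (G.Pᵀ * G.P)) μ := hfh μ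
      linarith
    exact_mod_cast hq
  -- chain argument: neighbours with large S
  set NB1 : Finset (Fin G.N) := (G.nbrs μ).filter (fun ν => (m:ℤ) ≤ SI ν) with hNB1
  have hsurj : ∀ j ∈ G.FP μ, ∃ ν ∈ NB1, G.gg μ ν = j := by
    intro j hj
    have hproxj : G.prox j μ := (G.mem_FP.mp hj).1
    obtain ⟨ν, hadj, hgg, a', ha', hinv⟩ :=
      G.chain_lemma μ (G.N - j.val) j rfl hproxj 1 le_rfl (G.inv_base hj)
    obtain ⟨hv1, hv2, hv3⟩ := hinv
    refine ⟨ν, ?_, by rw [hgg, G.gg_eq_self_of_free hj]⟩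
    rw [hNB1, Finset.mem_filter]
    refine ⟨G.mem_nbrs.mpr hadj, ?_⟩
    have hfν : (a' : ℚ) * (f μ : ℚ) ≤ (f ν : ℚ) := by
      rw [hf_eq ν, hf_eq μ, Finset.mul_sum]
      refine Finset.sum_le_sum (fun i _ => ?_)
      have hQ : (a':ℚ) * (G.vnat i μ : ℚ) ≤ (G.vnat i ν : ℚ) := by exact_mod_cast hv2 i
      calc (a':ℚ) * (fhat i * (G.vnat i μ : ℚ)) = fhat i * ((a':ℚ) * (G.vnat i μ : ℚ)) := by ring
        _ ≤ fhat i * (G.vnat i ν : ℚ) := mul_le_mul_of_nonneg_left hQ (hfh i)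
    have hfZ : (a':ℤ) * f μ ≤ f ν := by exact_mod_cast hfν
    have hkν : (a':ℤ) * ((G.kInt μ : ℤ) + 1) + 1 ≤ (G.kInt ν : ℤ) + 1 := by exact_mod_cast hv3
    have heν : (a':ℤ) * eI μ + 1 ≤ eI ν := by
      have h1 : eI μ = f μ + ((G.kInt μ : ℤ) + 1) := by simp only [heI]; ring
      have h2 : eI ν = f ν + ((G.kInt ν : ℤ) + 1) := by simp only [heI]; ring
      rw [h1, h2]
      nlinarith [hfZ, hkν]
    have hvν : (G.vnat μ ν : ℤ) = (a':ℤ) * (m:ℤ) := by exact_mod_cast hv1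
    have hm1 : (1:ℤ) ≤ (m:ℤ) := by exact_mod_cast G.vnat_pos μ μ
    simp only [hSI]
    rw [hvν]
    have hmul := mul_le_mul_of_nonneg_left heν (by linarith : (0:ℤ) ≤ (m:ℤ))
    nlinarith
  have hcard : (G.FP μ).card ≤ NB1.card := by
    refine Finset.card_le_card_of_surjOn (G.gg μ) ?_
    intro j hj
    obtain ⟨ν, hν, hgg⟩ := hsurj j hj
    exact ⟨ν, hν, hgg⟩
  obtain ⟨im, him_sub, him_card⟩ := Finset.exists_subset_card_eq hcard
  set T : ℕ := (G.FP μ).card with hT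
  have hA : 0 ≤ Ehat + (T:ℤ) := by
    rw [hT]
    omega
  set S' : Fin G.N → ℤ := fun ν => SI ν - (if ν ∈ im then (m:ℤ) else 0) with hS'
  have him_nbrs : im ⊆ G.nbrs μ := him_sub.trans (Finset.filter_subset _ _)
  have hS'nn : ∀ ν ∈ G.nbrs μ, 0 ≤ S' ν := by
    intro ν hν
    simp only [hS']
    by_cases hmem : ν ∈ im
    · rw [if_pos hmem]
      have h := him_sub hmem
      rw [hNB1, Finset.mem_filter] at h
      linarith [h.2]
    · rw [if_neg hmem]
      simpa using hSnn ν
  have hsum_ite : ∑ ν ∈ G.nbrs μ, (if ν ∈ im then (m:ℤ) else 0) = (T:ℤ) * (m:ℤ) := by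
    rw [Finset.sum_ite_mem]
    rw [Finset.inter_eq_right.mpr him_nbrs]
    rw [Finset.sum_const, him_card]
    simp [mul_comm]
  have htel2 : eI μ = (m:ℤ) * (Ehat + (T:ℤ)) + ∑ ν ∈ G.nbrs μ, S' ν := by
    have hsplit : ∑ ν ∈ G.nbrs μ, S' ν
        = (∑ ν ∈ G.nbrs μ, SI ν) - (T:ℤ) * (m:ℤ) := by
      simp only [hS']
      rw [Finset.sum_sub_distrib, hsum_ite]
    rw [hsplit]
    linear_combination htel
  set nA : ℕ := (Ehat + (T:ℤ)).toNat with hnA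
  set nS : Fin G.N → ℕ := fun ν => (S' ν).toNat with hnS
  set n : ℕ := m * nA + ∑ ν ∈ G.nbrs μ, nS ν with hn
  have hncast : ((n:ℕ) : ℤ) = eI μ := by
    rw [hn]
    push_cast
    rw [hnA, Int.toNat_of_nonneg hA]
    have : ∑ ν ∈ G.nbrs μ, ((nS ν : ℕ) : ℤ) = ∑ ν ∈ G.nbrs μ, S' ν := by
      refine Finset.sum_congr rfl (fun ν hν => ?_)
      simp only [hnS]
      rw [Int.toNat_of_nonneg (hS'nn ν hν)]
    rw [this]
    linarith [htel2]
  have hmem : n ∈ G.Ssg μ := by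
    rw [hn]
    refine AddSubmonoid.add_mem _ ?_ (AddSubmonoid.sum_mem _ (fun ν hν => ?_))
    · refine G.mem_Ssg_of_dvd (ν := μ) ?_
      rw [G.sgcd_self μ, ← hm]
      exact dvd_mul_right m nA
    · refine G.mem_Ssg_of_dvd (ν := ν) ?_
      have hd1 : (G.sgcd μ ν : ℤ) ∣ (m:ℤ) := Int.natCast_dvd_natCast.mpr (hm ▸ G.sgcd_dvd_diag μ ν)
      have hd2 : (G.sgcd μ ν : ℤ) ∣ (G.vnat μ ν : ℤ) :=
        Int.natCast_dvd_natCast.mpr (G.sgcd_dvd_nbr (G.mem_nbrs.mp hν))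
      have hd3 : (G.sgcd μ ν : ℤ) ∣ S' ν := by
        simp only [hS', hSI]
        refine dvd_sub (dvd_sub (hd1.mul_right _) (hd2.mul_right _)) ?_
        split_ifs
        · exact hd1
        · exact dvd_zero _
      have hd4 : (G.sgcd μ ν : ℤ) ∣ ((nS ν : ℕ) : ℤ) := by
        simp only [hnS]
        rw [Int.toNat_of_nonneg (hS'nn ν hν)]
        exact hd3
      exact_mod_cast hd4
  refine ⟨n, hmem, ?_⟩
  rw [hxi, hlam μ, mul_comm, div_mul_cancel₀ _ (ne_of_gt (hdpos μ))]
  exact_mod_cast congrArg (fun z : ℤ => (z : ℚ)) hncast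
end
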